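/- arXiv:1608.04010 — 5 statements merged into one kernel-verified Lean document; each statement's English description precedes it below -/
import Mathlib

section
/- (Uniqueness in the Lévy–Khintchine formula for intervals) Let −∞ ≤ a < b ≤ ∞, fix t₀ ∈ (a,b), and suppose ψ : (a,b) → ℝ satisfies ψ(t) = c + d(t−t₀) + ∫_ℝ e_λ(t) e^{−λt₀} dμ(λ) for all t ∈ (a,b), where μ is a positive Borel measure on ℝ, c, d ∈ ℝ, e_λ(t) = (1 − λ(t−t₀) − e^{−λ(t−t₀)})/λ² for λ ≠ 0, e₀(t) = −(t−t₀)²/2, and all integrals are finite. Then ∫_ℝ e^{−λt} dμ(λ) < ∞ for every t ∈ (a,b), ψ is twice differentiable with ψ″(t) = −∫_ℝ e^{−λt} dμ(λ) for all t ∈ (a,b), and c = ψ(t₀), d = ψ′(t₀). -/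
open MeasureTheory Real

/-- The elementary kernels of the Lévy–Khintchine formula on intervals:
`e_λ(t) = (1 - λ(t-t₀) - e^{-λ(t-t₀)})/λ²` for `λ ≠ 0` and `e₀(t) = -(t-t₀)²/2`. -/
noncomputable def eFun (t₀ l t : ℝ) : ℝ :=
  if l = 0 then -(t - t₀) ^ 2 / 2
  else (1 - l * (t - t₀) - Real.exp (-l * (t - t₀))) / l ^ 2

open Set


lemma sq_exp_half (y : ℝ) : (Real.exp (y/2))^2 = Real.exp y := by
  rw [sq, ← Real.exp_add]; ring_nf

lemma one_add_sq_le_exp {y : ℝ} (hy : 0 ≤ y) : (1 + y/2)^2 ≤ Real.exp y := by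
  have h := Real.add_one_le_exp (y/2)
  calc (1 + y/2)^2 ≤ (Real.exp (y/2))^2 := by nlinarith [Real.exp_pos (y/2)]
    _ = Real.exp y := sq_exp_half y

lemma one_sub_sq_le_exp_neg {x : ℝ} (hx : x ≤ 2) : (1 - x/2)^2 ≤ Real.exp (-x) := by
  have h := Real.add_one_le_exp (-x/2)
  have h0 : (0:ℝ) ≤ 1 - x/2 := by linarith
  calc (1 - x/2)^2 ≤ (Real.exp (-x/2))^2 := by nlinarith [Real.exp_pos (-x/2)]
    _ = Real.exp (-x) := by rw [sq, ← Real.exp_add]; ring_nf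

lemma quadLB (x : ℝ) : x^2/4 * Real.exp (-|x|) ≤ Real.exp (-x) - 1 + x := by
  rcases le_total x 0 with hx | hx
  · rw [abs_of_nonpos hx, neg_neg]
    have h1 : (1 - x/2)^2 ≤ Real.exp (-x) := one_sub_sq_le_exp_neg (by linarith)
    have h2 : Real.exp x ≤ 1 := Real.exp_le_one_iff.mpr hx
    nlinarith [mul_le_mul_of_nonneg_left h2 (by positivity : (0:ℝ) ≤ x^2/4)]
  · rw [abs_of_nonneg hx]
    have hE := (Real.exp_pos (-x)).le
    rcases le_total x 2 with hx2 | hx2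
    · have h1 : (1 - x/2)^2 ≤ Real.exp (-x) := one_sub_sq_le_exp_neg hx2
      have hq : (0:ℝ) ≤ 1 - x^2/4 := by nlinarith
      have h4 := mul_le_mul_of_nonneg_right h1 hq
      have key : (1-x/2)^2 * (1 - x^2/4) - (1-x) = x^3*(4-x)/16 := by ring
      nlinarith [mul_nonneg (mul_nonneg (mul_nonneg hx hx) hx) (by linarith : (0:ℝ) ≤ 4 - x)]
    · have h1 : (1 + x/2)^2 * Real.exp (-x) ≤ 1 := by
        have h2 := one_add_sq_le_exp (by linarith : (0:ℝ) ≤ x)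
        have h3 : Real.exp (-x) * Real.exp x = 1 := by rw [← Real.exp_add]; simp
        nlinarith [Real.exp_pos x]
      have h4 := mul_le_mul_of_nonneg_right h1 (by linarith : (0:ℝ) ≤ x - 2)
      nlinarith [sq_nonneg x, mul_nonneg hE (by linarith : (0:ℝ) ≤ x - 2)]

lemma tailLB {x : ℝ} (hx : x ≤ -6) : Real.exp (-x)/2 ≤ Real.exp (-x) - 1 + x := by
  have h1 : (1 + (-x)/2)^2 ≤ Real.exp (-x) := one_add_sq_le_exp (by linarith)
  nlinarith [sq_nonneg (x+2)]

lemma sqExp {δ l : ℝ} (hδ : 0 < δ) (hl : 0 ≤ l) : l^2 * Real.exp (-(l*δ)) ≤ 4/δ^2 := by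
  have h2 : (l*δ/2)^2 ≤ Real.exp (l*δ) := by
    have h := Real.add_one_le_exp (l*δ/2)
    calc (l*δ/2)^2 ≤ (Real.exp (l*δ/2))^2 := by
          nlinarith [Real.exp_pos (l*δ/2), mul_nonneg hl hδ.le]
      _ = Real.exp (l*δ) := sq_exp_half _
  have h3 : Real.exp (-(l*δ)) * Real.exp (l*δ) = 1 := by rw [← Real.exp_add]; simp
  have hE := (Real.exp_pos (-(l*δ))).le
  rw [le_div_iff₀ (by positivity : (0:ℝ) < δ^2)]
  nlinarith [mul_le_mul_of_nonneg_right h2 hE]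



noncomputable def fFun (t₀ l t : ℝ) : ℝ :=
  if l = 0 then -(t - t₀) else (Real.exp (-l * t) - Real.exp (-l * t₀)) / l

lemma hasDerivAt_eFun (t₀ l t : ℝ) :
    HasDerivAt (fun s => eFun t₀ l s * Real.exp (-l * t₀)) (fFun t₀ l t) t := by
  rcases eq_or_ne l 0 with rfl | hl
  · have hfe : (fun s => eFun t₀ 0 s * Real.exp (-0 * t₀)) = fun s => -((s - t₀)^2/2) := by
      funext s; simp [eFun]; ring
    rw [hfe, show fFun t₀ 0 t = -(t - t₀) by simp [fFun]]
    have h1 : HasDerivAt (fun s : ℝ => s - t₀) 1 t := (hasDerivAt_id t).sub_const t₀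
    have := ((h1.pow 2).div_const 2).neg
    exact this.congr_deriv (by norm_num)
  · simp only [eFun, fFun, if_neg hl]
    have h1 : HasDerivAt (fun s : ℝ => -l * (s - t₀)) (-l) t := by
      simpa using ((hasDerivAt_id t).sub_const t₀).const_mul (-l)
    have h2 : HasDerivAt (fun s : ℝ => Real.exp (-l * (s - t₀)))
        (Real.exp (-l * (t - t₀)) * (-l)) t := h1.exp
    have h3 : HasDerivAt (fun s : ℝ => 1 - l * (s - t₀) - Real.exp (-l * (s - t₀)))
        (-l - Real.exp (-l * (t - t₀)) * (-l)) t := by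
      have h0 : HasDerivAt (fun s : ℝ => 1 - l * (s - t₀)) (-l) t := by
        simpa using (((hasDerivAt_id t).sub_const t₀).const_mul l).const_sub 1
      exact h0.sub h2
    have key := (h3.div_const (l^2)).mul_const (Real.exp (-l * t₀))
    have he : Real.exp (-l * (t - t₀)) * Real.exp (-l * t₀) = Real.exp (-l * t) := by
      rw [← Real.exp_add]; ring_nf
    have heq : (-l - Real.exp (-l*(t-t₀)) * -l)/l^2 * Real.exp (-l*t₀)
        = (Real.exp (-l*t) - Real.exp (-l*t₀))/l := by
      rw [← he]; field_simp; ring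
    rw [← heq]; exact key
lemma hasDerivAt_fFun (t₀ l t : ℝ) :
    HasDerivAt (fun s => fFun t₀ l s) (-Real.exp (-l * t)) t := by
  rcases eq_or_ne l 0 with rfl | hl
  · have hfe : (fun s => fFun t₀ 0 s) = fun s => -(s - t₀) := by
      funext s; simp [fFun]
    rw [hfe, show -Real.exp (-0 * t) = -1 by simp]
    exact ((hasDerivAt_id t).sub_const t₀).neg
  · simp only [fFun, if_neg hl]
    have h1 : HasDerivAt (fun s : ℝ => -l * s) (-l) t := by
      simpa using (hasDerivAt_id t).const_mul (-l)
    have h2 : HasDerivAt (fun s : ℝ => Real.exp (-l * s)) (Real.exp (-l * t) * (-l)) t := h1.exp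
    have := (h2.sub_const (Real.exp (-l * t₀))).div_const l
    exact this.congr_deriv (by field_simp)

lemma measurable_eFun (t₀ t : ℝ) : Measurable (fun l => eFun t₀ l t * Real.exp (-l * t₀)) := by
  apply Measurable.mul
  · unfold eFun
    apply Measurable.ite (measurableSet_eq)
    · exact measurable_const
    · fun_prop
  · fun_prop

lemma measurable_fFun (t₀ t : ℝ) : Measurable (fun l => fFun t₀ l t) := by
  unfold fFun
  apply Measurable.ite (measurableSet_eq)
  · exact measurable_const
  · fun_prop



lemma exp_between {u v s : ℝ} (l : ℝ) (hu : u ≤ s) (hs : s ≤ v) :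
    Real.exp (-l * s) ≤ Real.exp (-l * u) + Real.exp (-l * v) := by
  rcases le_total 0 l with hl | hl
  · have h : -l * s ≤ -l * u := by nlinarith
    exact (Real.exp_le_exp.mpr h).trans (le_add_of_nonneg_right (Real.exp_pos _).le)
  · have h : -l * s ≤ -l * v := by nlinarith
    exact (Real.exp_le_exp.mpr h).trans (le_add_of_nonneg_left (Real.exp_pos _).le)

lemma fFun_abs_le {u v t₀ s : ℝ} (l : ℝ) (hus : u ≤ s) (hsv : s ≤ v)
    (hut : u ≤ t₀) (htv : t₀ ≤ v) :
    |fFun t₀ l s| ≤ (v - u) * (Real.exp (-l * u) + Real.exp (-l * v)) := by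
  have hEu := (Real.exp_pos (-l * u)).le
  have hEv := (Real.exp_pos (-l * v)).le
  rcases eq_or_ne l 0 with rfl | hl
  · have h0 : fFun t₀ 0 s = -(s - t₀) := by simp [fFun]
    rw [h0, abs_neg, abs_sub_le_iff]
    simp only [neg_zero, zero_mul, Real.exp_zero]
    constructor <;> linarith
  · simp only [fFun, if_neg hl]
    have hder : ∀ x ∈ Icc u v, HasDerivWithinAt (fun x => Real.exp (-l * x))
        (Real.exp (-l * x) * (-l)) (Icc u v) x := by
      intro x _
      have h1 : HasDerivAt (fun x : ℝ => -l * x) (-l) x := by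
        simpa using (hasDerivAt_id x).const_mul (-l)
      exact h1.exp.hasDerivWithinAt
    have hbd : ∀ x ∈ Icc u v, ‖Real.exp (-l * x) * (-l)‖ ≤
        (Real.exp (-l * u) + Real.exp (-l * v)) * |l| := by
      intro x hx
      rw [norm_mul, norm_neg, Real.norm_eq_abs, Real.norm_eq_abs,
        abs_of_pos (Real.exp_pos _)]
      exact mul_le_mul_of_nonneg_right (exp_between l hx.1 hx.2) (abs_nonneg l)
    have key := (convex_Icc u v).norm_image_sub_le_of_norm_hasDerivWithin_le hder hbd
      (⟨hut, htv⟩ : t₀ ∈ Icc u v) (⟨hus, hsv⟩ : s ∈ Icc u v)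
    rw [Real.norm_eq_abs, Real.norm_eq_abs] at key
    rw [abs_div]
    rw [div_le_iff₀ (abs_pos.mpr hl)]
    calc |Real.exp (-l * s) - Real.exp (-l * t₀)|
        ≤ (Real.exp (-l * u) + Real.exp (-l * v)) * |l| * |s - t₀| := key
      _ ≤ (Real.exp (-l * u) + Real.exp (-l * v)) * |l| * (v - u) := by
          refine mul_le_mul_of_nonneg_left ?_ (by positivity)
          rw [abs_sub_le_iff]; constructor <;> linarith
      _ = (v - u) * (Real.exp (-l * u) + Real.exp (-l * v)) * |l| := by ring




-- tail estimate, right tail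
lemma tail_right {t₀ t₁ t l : ℝ} (h₁₀ : t₁ < t₀) (h₁t : t₁ < t)
    (hl : 6 / (t₀ - t₁) ≤ l) :
    Real.exp (-l * t) ≤ 8/(t-t₁)^2 * |eFun t₀ l t₁ * Real.exp (-l * t₀)| := by
  have hd : (0:ℝ) < t₀ - t₁ := by linarith
  have hl0 : 0 < l := lt_of_lt_of_le (by positivity) hl
  have hlne : l ≠ 0 := ne_of_gt hl0
  set x := l * (t₁ - t₀) with hxdef
  have hx : x ≤ -6 := by
    rw [div_le_iff₀ hd] at hl; nlinarith
  have hEx := tailLB hx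
  have h5 : (0:ℝ) ≤ Real.exp (-x) - 1 + x := by
    have := Real.add_one_le_exp (-x); linarith
  have hE0 := (Real.exp_pos (-l * t₀)).le
  have hefun : eFun t₀ l t₁ = (1 - x - Real.exp (-x)) / l^2 := by
    simp only [eFun, if_neg hlne, hxdef, neg_mul]
  have habs : |eFun t₀ l t₁ * Real.exp (-l * t₀)|
      = (Real.exp (-x) - 1 + x) * Real.exp (-l * t₀) / l^2 := by
    rw [hefun]
    rw [abs_of_nonpos (by
      apply mul_nonpos_of_nonpos_of_nonneg _ hE0
      apply div_nonpos_of_nonpos_of_nonneg (by linarith) (by positivity))]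
    field_simp; ring
  have hprod : Real.exp (-x) * Real.exp (-l * t₀) = Real.exp (-l * t₁) := by
    rw [← Real.exp_add]; congr 1; ring
  have hl2 : (0:ℝ) < l^2 := by positivity
  have hkey : Real.exp (-l * t₁) ≤ 2 * l^2 * |eFun t₀ l t₁ * Real.exp (-l * t₀)| := by
    rw [habs]
    have h6 : 2 * l^2 * ((Real.exp (-x) - 1 + x) * Real.exp (-l * t₀) / l^2)
        = 2 * ((Real.exp (-x) - 1 + x) * Real.exp (-l * t₀)) := by
      field_simp
    rw [h6]
    nlinarith [mul_le_mul_of_nonneg_right hEx hE0]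
  have hsq : l^2 * Real.exp (-(l*(t - t₁))) ≤ 4/(t-t₁)^2 := sqExp (by linarith) hl0.le
  have hsplit : Real.exp (-l * t) = Real.exp (-l * t₁) * Real.exp (-(l * (t - t₁))) := by
    rw [← Real.exp_add]; congr 1; ring
  have hEd := (Real.exp_pos (-(l*(t-t₁)))).le
  have habsn : (0:ℝ) ≤ |eFun t₀ l t₁ * Real.exp (-l * t₀)| := abs_nonneg _
  calc Real.exp (-l * t) = Real.exp (-l * t₁) * Real.exp (-(l * (t - t₁))) := hsplit
    _ ≤ (2 * l^2 * |eFun t₀ l t₁ * Real.exp (-l * t₀)|) * Real.exp (-(l * (t - t₁))) :=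
        mul_le_mul_of_nonneg_right hkey hEd
    _ = 2 * |eFun t₀ l t₁ * Real.exp (-l * t₀)| * (l^2 * Real.exp (-(l * (t - t₁)))) := by ring
    _ ≤ 2 * |eFun t₀ l t₁ * Real.exp (-l * t₀)| * (4/(t-t₁)^2) := by
        refine mul_le_mul_of_nonneg_left hsq (by positivity)
    _ = 8/(t-t₁)^2 * |eFun t₀ l t₁ * Real.exp (-l * t₀)| := by ring

lemma tail_left {t₀ t₂ t l : ℝ} (h₀₂ : t₀ < t₂) (ht₂ : t < t₂)
    (hl : l ≤ -(6 / (t₂ - t₀))) :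
    Real.exp (-l * t) ≤ 8/(t₂-t)^2 * |eFun t₀ l t₂ * Real.exp (-l * t₀)| := by
  have hd : (0:ℝ) < t₂ - t₀ := by linarith
  have hl0 : l < 0 := lt_of_le_of_lt hl (neg_lt_zero.mpr (by positivity))
  have hlne : l ≠ 0 := ne_of_lt hl0
  set x := l * (t₂ - t₀) with hxdef
  have hx : x ≤ -6 := by
    have h6 : 6 / (t₂ - t₀) ≤ -l := by linarith
    rw [div_le_iff₀ hd] at h6
    nlinarith [h6]
  have hEx := tailLB hx
  have h5 : (0:ℝ) ≤ Real.exp (-x) - 1 + x := by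
    have := Real.add_one_le_exp (-x); linarith
  have hE0 := (Real.exp_pos (-l * t₀)).le
  have hefun : eFun t₀ l t₂ = (1 - x - Real.exp (-x)) / l^2 := by
    simp only [eFun, if_neg hlne, hxdef, neg_mul]
  have habs : |eFun t₀ l t₂ * Real.exp (-l * t₀)|
      = (Real.exp (-x) - 1 + x) * Real.exp (-l * t₀) / l^2 := by
    rw [hefun]
    rw [abs_of_nonpos (by
      apply mul_nonpos_of_nonpos_of_nonneg _ hE0
      apply div_nonpos_of_nonpos_of_nonneg (by linarith) (by positivity))]
    field_simp; ring
  have hprod : Real.exp (-x) * Real.exp (-l * t₀) = Real.exp (-l * t₂) := by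
    rw [← Real.exp_add]; congr 1; ring
  have hl2 : (0:ℝ) < l^2 := by positivity
  have hkey : Real.exp (-l * t₂) ≤ 2 * l^2 * |eFun t₀ l t₂ * Real.exp (-l * t₀)| := by
    rw [habs]
    have h6 : 2 * l^2 * ((Real.exp (-x) - 1 + x) * Real.exp (-l * t₀) / l^2)
        = 2 * ((Real.exp (-x) - 1 + x) * Real.exp (-l * t₀)) := by
      field_simp
    rw [h6]
    nlinarith [mul_le_mul_of_nonneg_right hEx hE0]
  have hsq : (-l)^2 * Real.exp (-((-l)*(t₂ - t))) ≤ 4/(t₂-t)^2 :=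
    sqExp (by linarith) (by linarith)
  have hsplit : Real.exp (-l * t) = Real.exp (-l * t₂) * Real.exp (-((-l) * (t₂ - t))) := by
    rw [← Real.exp_add]; congr 1; ring
  have hEd := (Real.exp_pos (-((-l)*(t₂-t)))).le
  calc Real.exp (-l * t) = Real.exp (-l * t₂) * Real.exp (-((-l) * (t₂ - t))) := hsplit
    _ ≤ (2 * l^2 * |eFun t₀ l t₂ * Real.exp (-l * t₀)|) * Real.exp (-((-l) * (t₂ - t))) :=
        mul_le_mul_of_nonneg_right hkey hEd
    _ = 2 * |eFun t₀ l t₂ * Real.exp (-l * t₀)| * ((-l)^2 * Real.exp (-((-l) * (t₂ - t)))) := by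
        ring
    _ ≤ 2 * |eFun t₀ l t₂ * Real.exp (-l * t₀)| * (4/(t₂-t)^2) :=
        mul_le_mul_of_nonneg_left hsq (by positivity)
    _ = 8/(t₂-t)^2 * |eFun t₀ l t₂ * Real.exp (-l * t₀)| := by ring

lemma compact_lower {t₀ t₁ M l : ℝ} (h₁₀ : t₁ < t₀) (hM : 0 < M) (hl : |l| ≤ M) :
    (t₀-t₁)^2/4 * Real.exp (-(M*(t₀-t₁)) - M*|t₀|) ≤ |eFun t₀ l t₁ * Real.exp (-l * t₀)| := by
  have hd : (0:ℝ) < t₀ - t₁ := by linarith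
  have hEle : Real.exp (-(M*(t₀-t₁)) - M*|t₀|) ≤ 1 := by
    apply Real.exp_le_one_iff.mpr
    nlinarith [abs_nonneg t₀]
  have hEpos := (Real.exp_pos (-(M*(t₀-t₁)) - M*|t₀|)).le
  rcases eq_or_ne l 0 with rfl | hlne
  · have h0 : eFun t₀ 0 t₁ * Real.exp (-0 * t₀) = -(t₁ - t₀)^2/2 := by simp [eFun]
    rw [h0, show |(-(t₁ - t₀)^2/2)| = (t₁-t₀)^2/2 by
      rw [abs_of_nonpos (by nlinarith [sq_nonneg (t₁ - t₀)])]; ring]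
    nlinarith [mul_le_mul_of_nonneg_left hEle (by positivity : (0:ℝ) ≤ (t₀-t₁)^2/4)]
  · set x := l * (t₁ - t₀) with hxdef
    have h5 : (0:ℝ) ≤ Real.exp (-x) - 1 + x := by
      have := Real.add_one_le_exp (-x); linarith
    have hE0 := (Real.exp_pos (-l * t₀)).le
    have hefun : eFun t₀ l t₁ = (1 - x - Real.exp (-x)) / l^2 := by
      simp only [eFun, if_neg hlne, hxdef, neg_mul]
    have habs : |eFun t₀ l t₁ * Real.exp (-l * t₀)|
        = (Real.exp (-x) - 1 + x) * Real.exp (-l * t₀) / l^2 := by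
      rw [hefun]
      rw [abs_of_nonpos (by
        apply mul_nonpos_of_nonpos_of_nonneg _ hE0
        apply div_nonpos_of_nonpos_of_nonneg (by linarith) (by positivity))]
      field_simp; ring
    have hquad := quadLB x
    have hxabs : |x| ≤ M * (t₀ - t₁) := by
      rw [hxdef, abs_mul, abs_of_nonpos (by linarith : t₁ - t₀ ≤ 0)]
      have := mul_le_mul_of_nonneg_right hl (by linarith : (0:ℝ) ≤ -(t₁ - t₀))
      linarith
    have he1 : Real.exp (-(M*(t₀-t₁))) ≤ Real.exp (-|x|) := Real.exp_le_exp.mpr (by linarith)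
    have he2 : Real.exp (-(M*|t₀|)) ≤ Real.exp (-l*t₀) := by
      apply Real.exp_le_exp.mpr
      have h7 : |l * t₀| ≤ M * |t₀| := by
        rw [abs_mul]; exact mul_le_mul_of_nonneg_right hl (abs_nonneg _)
      have h8 := le_abs_self (l * t₀)
      linarith [h7, h8]
    have hl2 : (0:ℝ) < l^2 := by positivity
    rw [habs, le_div_iff₀ hl2]
    have hx2 : x^2 = l^2 * (t₀-t₁)^2 := by rw [hxdef]; ring
    have hsplit : Real.exp (-(M*(t₀-t₁)) - M*|t₀|)
        = Real.exp (-(M*(t₀-t₁))) * Real.exp (-(M*|t₀|)) := by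
      rw [← Real.exp_add]; ring_nf
    have step1 : (t₀-t₁)^2/4 * Real.exp (-(M*(t₀-t₁)) - M*|t₀|) * l^2
        = x^2/4 * (Real.exp (-(M*(t₀-t₁))) * Real.exp (-(M*|t₀|))) := by
      rw [hsplit, hx2]; ring
    rw [step1]
    calc x^2/4 * (Real.exp (-(M*(t₀-t₁))) * Real.exp (-(M*|t₀|)))
        ≤ x^2/4 * (Real.exp (-|x|) * Real.exp (-l * t₀)) := by
          apply mul_le_mul_of_nonneg_left _ (by positivity)
          exact mul_le_mul he1 he2 (Real.exp_pos _).le (Real.exp_pos _).le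
      _ = x^2/4 * Real.exp (-|x|) * Real.exp (-l * t₀) := by ring
      _ ≤ (Real.exp (-x) - 1 + x) * Real.exp (-l * t₀) :=
          mul_le_mul_of_nonneg_right hquad hE0

lemma integrable_exp_of_rep {μ : Measure ℝ} {t₀ t₁ t₂ t : ℝ}
    (h₁₀ : t₁ < t₀) (h₁t : t₁ < t) (ht₂ : t < t₂) (h₀₂ : t₀ < t₂)
    (h1 : Integrable (fun l => eFun t₀ l t₁ * Real.exp (-l * t₀)) μ)
    (h2 : Integrable (fun l => eFun t₀ l t₂ * Real.exp (-l * t₀)) μ) :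
    Integrable (fun l => Real.exp (-l * t)) μ := by
  set M : ℝ := max (6/(t₀-t₁)) (6/(t₂-t₀)) with hMdef
  have hMpos : 0 < M := lt_of_lt_of_le (div_pos (by norm_num) (by linarith : (0:ℝ) < t₀-t₁)) (le_max_left _ _)
  set K : ℝ := max (8/(t-t₁)^2) (8/(t₂-t)^2) with hKdef
  have hK0 : (0:ℝ) ≤ K := le_trans (by positivity) (le_max_left _ _)
  set ε : ℝ := (t₀-t₁)^2/4 * Real.exp (-(M*(t₀-t₁)) - M*|t₀|) with hεdef
  have hε : 0 < ε :=
    mul_pos (by nlinarith : (0:ℝ) < (t₀-t₁)^2/4) (Real.exp_pos _)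
  have hμI : μ (Icc (-M) M) < ⊤ := by
    have hsub : Icc (-M) M ⊆ {l | ε ≤ |eFun t₀ l t₁ * Real.exp (-l*t₀)|} := by
      intro l hl
      exact compact_lower h₁₀ hMpos (abs_le.mpr ⟨hl.1, hl.2⟩)
    exact lt_of_le_of_lt (measure_mono hsub) (h1.abs.measure_ge_lt_top hε)
  set B : ℝ → ℝ := fun l => Set.indicator (Icc (-M) M) (fun _ => Real.exp (M*|t|)) l
      + K * (|eFun t₀ l t₁ * Real.exp (-l*t₀)| + |eFun t₀ l t₂ * Real.exp (-l*t₀)|) with hBdef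
  have hBint : Integrable B μ := by
    apply Integrable.add
    · exact (integrable_indicator_iff measurableSet_Icc).mpr
        (integrableOn_const hμI.ne)
    · exact (h1.abs.add h2.abs).const_mul K
  apply Integrable.mono' hBint (Continuous.aestronglyMeasurable (by fun_prop))
  refine ae_of_all _ fun l => ?_
  rw [Real.norm_eq_abs, abs_of_pos (Real.exp_pos _)]
  have hnn : (0:ℝ) ≤ K * (|eFun t₀ l t₁ * Real.exp (-l*t₀)| + |eFun t₀ l t₂ * Real.exp (-l*t₀)|) := by
    positivity
  have hindnn : (0:ℝ) ≤ Set.indicator (Icc (-M) M) (fun _ => Real.exp (M*|t|)) l :=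
    Set.indicator_nonneg (fun _ _ => (Real.exp_pos _).le) l
  rcases le_or_gt |l| M with hc | hc
  · have hmem : l ∈ Icc (-M) M := by
      rcases abs_le.mp hc with ⟨ha, hb⟩; exact ⟨ha, hb⟩
    have hind : Set.indicator (Icc (-M) M) (fun _ => Real.exp (M*|t|)) l = Real.exp (M*|t|) :=
      Set.indicator_of_mem hmem _
    have hexp : Real.exp (-l*t) ≤ Real.exp (M*|t|) := by
      apply Real.exp_le_exp.mpr
      have h7 : |l*t| ≤ M*|t| := by
        rw [abs_mul]; exact mul_le_mul_of_nonneg_right hc (abs_nonneg _)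
      have h8 := neg_abs_le (l*t)
      linarith
    rw [hBdef]
    simp only [hind]
    linarith
  · rcases lt_abs.mp hc with hpos | hneg
    · have hl1 : 6/(t₀-t₁) ≤ l := le_trans (le_max_left _ _) hpos.le
      have htr := tail_right h₁₀ h₁t hl1
      have hKK : 8/(t-t₁)^2 * |eFun t₀ l t₁ * Real.exp (-l*t₀)| ≤
          K * |eFun t₀ l t₁ * Real.exp (-l*t₀)| :=
        mul_le_mul_of_nonneg_right (le_max_left _ _) (abs_nonneg _)
      have h9 : (0:ℝ) ≤ K * |eFun t₀ l t₂ * Real.exp (-l*t₀)| := by positivity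
      rw [hBdef]
      simp only []
      nlinarith [htr, hKK]
    · have hl2 : l ≤ -(6/(t₂-t₀)) := by
        have := le_max_right (6/(t₀-t₁)) (6/(t₂-t₀))
        linarith
      have htl := tail_left h₀₂ ht₂ hl2
      have hKK : 8/(t₂-t)^2 * |eFun t₀ l t₂ * Real.exp (-l*t₀)| ≤
          K * |eFun t₀ l t₂ * Real.exp (-l*t₀)| :=
        mul_le_mul_of_nonneg_right (le_max_right _ _) (abs_nonneg _)
      have h9 : (0:ℝ) ≤ K * |eFun t₀ l t₁ * Real.exp (-l*t₀)| := by positivity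
      rw [hBdef]
      simp only []
      nlinarith [htl, hKK]





lemma hasDerivAt_int_eFun {μ : Measure ℝ} {t₀ u v t : ℝ}
    (hu : u < t) (htv : t < v) (hu0 : u ≤ t₀) (h0v : t₀ ≤ v)
    (hInt : Integrable (fun l => eFun t₀ l t * Real.exp (-l * t₀)) μ)
    (hIu : Integrable (fun l => Real.exp (-l * u)) μ)
    (hIv : Integrable (fun l => Real.exp (-l * v)) μ) :
    Integrable (fun l => fFun t₀ l t) μ ∧
    HasDerivAt (fun s => ∫ l, eFun t₀ l s * Real.exp (-l * t₀) ∂μ)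
      (∫ l, fFun t₀ l t ∂μ) t := by
  have hεpos : 0 < min (t - u) (v - t) := lt_min (by linarith) (by linarith)
  have hball : ∀ s ∈ Metric.ball t (min (t - u) (v - t)), u ≤ s ∧ s ≤ v := by
    intro s hs
    rw [Metric.mem_ball, Real.dist_eq] at hs
    have h1 := abs_lt.mp hs
    have h2 := min_le_left (t - u) (v - t)
    have h3 := min_le_right (t - u) (v - t)
    constructor <;> linarith [h1.1, h1.2]
  exact hasDerivAt_integral_of_dominated_loc_of_deriv_le
    (F := fun s l => eFun t₀ l s * Real.exp (-l * t₀))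
    (F' := fun s l => fFun t₀ l s)
    (bound := fun l => (v - u) * (Real.exp (-l * u) + Real.exp (-l * v)))
    (Metric.ball_mem_nhds t hεpos)
    (Filter.Eventually.of_forall fun s => (measurable_eFun t₀ s).aestronglyMeasurable)
    hInt
    ((measurable_fFun t₀ t).aestronglyMeasurable)
    (ae_of_all _ fun l s hs => by
      rw [Real.norm_eq_abs]
      exact fFun_abs_le l (hball s hs).1 (hball s hs).2 hu0 h0v)
    ((hIu.add hIv).const_mul (v - u))
    (ae_of_all _ fun l s _ => hasDerivAt_eFun t₀ l s)

lemma hasDerivAt_int_fFun {μ : Measure ℝ} {t₀ u v t : ℝ}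
    (hu : u < t) (htv : t < v)
    (hInt : Integrable (fun l => fFun t₀ l t) μ)
    (hIu : Integrable (fun l => Real.exp (-l * u)) μ)
    (hIv : Integrable (fun l => Real.exp (-l * v)) μ) :
    HasDerivAt (fun s => ∫ l, fFun t₀ l s ∂μ) (-∫ l, Real.exp (-l * t) ∂μ) t := by
  have hεpos : 0 < min (t - u) (v - t) := lt_min (by linarith) (by linarith)
  have hball : ∀ s ∈ Metric.ball t (min (t - u) (v - t)), u ≤ s ∧ s ≤ v := by
    intro s hs
    rw [Metric.mem_ball, Real.dist_eq] at hs
    have h1 := abs_lt.mp hs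
    have h2 := min_le_left (t - u) (v - t)
    have h3 := min_le_right (t - u) (v - t)
    constructor <;> linarith [h1.1, h1.2]
  have key := hasDerivAt_integral_of_dominated_loc_of_deriv_le
    (F := fun s l => fFun t₀ l s)
    (F' := fun s l => -Real.exp (-l * s))
    (bound := fun l => Real.exp (-l * u) + Real.exp (-l * v))
    (Metric.ball_mem_nhds t hεpos)
    (Filter.Eventually.of_forall fun s => (measurable_fFun t₀ s).aestronglyMeasurable)
    hInt
    ((Continuous.aestronglyMeasurable (by fun_prop)))
    (ae_of_all _ fun l s hs => by
      rw [norm_neg, Real.norm_eq_abs, abs_of_pos (Real.exp_pos _)]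
      exact exp_between l (hball s hs).1 (hball s hs).2)
    (hIu.add hIv)
    (ae_of_all _ fun l s _ => hasDerivAt_fFun t₀ l s)
  have h2 := key.2
  rwa [integral_neg] at h2

/-- Uniqueness in the Lévy–Khintchine formula on an open interval `(a,b)`
(with `-∞ ≤ a < b ≤ ∞`): if `ψ(t) = c + d(t-t₀) + ∫ e_λ(t) e^{-λt₀} dμ(λ)` on
`(a,b)`, then the Laplace transform of `μ` is finite on `(a,b)`, `ψ` is twice
differentiable with `ψ''(t) = -∫ e^{-λt} dμ(λ)` there, and `c = ψ(t₀)`,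
`d = ψ'(t₀)`. -/
theorem levy_khintchine_interval_uniqueness (a b : EReal) (hab : a < b)
    (t₀ : ℝ) (ht₀ : a < (t₀ : EReal) ∧ (t₀ : EReal) < b) (ψ : ℝ → ℝ)
    (μ : Measure ℝ) (c d : ℝ)
    (hrep : ∀ t : ℝ, a < (t : EReal) → (t : EReal) < b →
      Integrable (fun l => eFun t₀ l t * Real.exp (-l * t₀)) μ ∧
      ψ t = c + d * (t - t₀) + ∫ l, eFun t₀ l t * Real.exp (-l * t₀) ∂μ) :
    (∀ t : ℝ, a < (t : EReal) → (t : EReal) < b →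
      Integrable (fun l => Real.exp (-l * t)) μ ∧
      HasDerivAt ψ (deriv ψ t) t ∧
      HasDerivAt (deriv ψ) (-∫ l, Real.exp (-l * t) ∂μ) t) ∧
    c = ψ t₀ ∧ d = deriv ψ t₀ := by
  obtain ⟨ht₀a, ht₀b⟩ := ht₀
  -- sandwich points
  have sandwich : ∀ t : ℝ, a < (t : EReal) → (t : EReal) < b →
      ∃ u v : ℝ, a < (u : EReal) ∧ (u : EReal) < b ∧ a < (v : EReal) ∧ (v : EReal) < b ∧
        u < t ∧ u < t₀ ∧ t < v ∧ t₀ < v := by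
    intro t hat htb
    have hmin : a < ((min t t₀ : ℝ) : EReal) := by
      rcases min_cases t t₀ with ⟨h, _⟩ | ⟨h, _⟩ <;> rw [h] <;> assumption
    have hmax : ((max t t₀ : ℝ) : EReal) < b := by
      rcases max_cases t t₀ with ⟨h, _⟩ | ⟨h, _⟩ <;> rw [h] <;> assumption
    obtain ⟨u, hau, hu⟩ := EReal.exists_between_coe_real hmin
    obtain ⟨v, hv, hvb⟩ := EReal.exists_between_coe_real hmax
    have hu' : u < min t t₀ := by exact_mod_cast hu
    have hv' : max t t₀ < v := by exact_mod_cast hv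
    refine ⟨u, v, hau, ?_, ?_, hvb, ?_, ?_, ?_, ?_⟩
    · exact lt_trans hu (lt_of_le_of_lt (by exact_mod_cast min_le_left t t₀) htb)
    · exact lt_trans (lt_of_lt_of_le hat (by exact_mod_cast le_max_left t t₀)) hv
    · exact lt_of_lt_of_le hu' (min_le_left t t₀)
    · exact lt_of_lt_of_le hu' (min_le_right t t₀)
    · exact lt_of_le_of_lt (le_max_left t t₀) hv'
    · exact lt_of_le_of_lt (le_max_right t t₀) hv'
  -- Step 1 : integrability of the Laplace transform on (a,b)
  have key : ∀ t : ℝ, a < (t : EReal) → (t : EReal) < b →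
      Integrable (fun l => Real.exp (-l * t)) μ := by
    intro t hat htb
    obtain ⟨u, v, hau, hub, hav, hvb, hut, hut₀, htv, ht₀v⟩ := sandwich t hat htb
    exact integrable_exp_of_rep hut₀ hut htv ht₀v (hrep u hau hub).1 (hrep v hav hvb).1
  -- open set
  have hopen : IsOpen {s : ℝ | a < (s : EReal) ∧ (s : EReal) < b} := by
    have : {s : ℝ | a < (s : EReal) ∧ (s : EReal) < b}
        = Real.toEReal ⁻¹' (Set.Ioo a b) := rfl
    rw [this]
    exact isOpen_Ioo.preimage continuous_coe_real_ereal
  -- Step 2 : first derivative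
  have keyD : ∀ t : ℝ, a < (t : EReal) → (t : EReal) < b →
      Integrable (fun l => fFun t₀ l t) μ ∧
      HasDerivAt ψ (d + ∫ l, fFun t₀ l t ∂μ) t := by
    intro t hat htb
    obtain ⟨u, v, hau, hub, hav, hvb, hut, hut₀, htv, ht₀v⟩ := sandwich t hat htb
    have hF := hasDerivAt_int_eFun hut htv hut₀.le ht₀v.le (hrep t hat htb).1
      (key u hau hub) (key v hav hvb)
    have hψ : ψ =ᶠ[nhds t]
        fun s => c + d * (s - t₀) + ∫ l, eFun t₀ l s * Real.exp (-l * t₀) ∂μ :=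
      Filter.eventuallyEq_of_mem (hopen.mem_nhds ⟨hat, htb⟩)
        (fun s hs => (hrep s hs.1 hs.2).2)
    have hlin : HasDerivAt (fun s : ℝ => c + d * (s - t₀)) d t := by
      simpa using (((hasDerivAt_id t).sub_const t₀).const_mul d).const_add c
    exact ⟨hF.1, (hlin.add hF.2).congr_of_eventuallyEq hψ⟩
  have hderiv : ∀ t : ℝ, a < (t : EReal) → (t : EReal) < b →
      deriv ψ t = d + ∫ l, fFun t₀ l t ∂μ :=
    fun t hat htb => ((keyD t hat htb).2).deriv
  -- Step 3 : second derivative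
  have keyD2 : ∀ t : ℝ, a < (t : EReal) → (t : EReal) < b →
      HasDerivAt (deriv ψ) (-∫ l, Real.exp (-l * t) ∂μ) t := by
    intro t hat htb
    obtain ⟨u, v, hau, hub, hav, hvb, hut, hut₀, htv, ht₀v⟩ := sandwich t hat htb
    have hG := hasDerivAt_int_fFun hut htv (keyD t hat htb).1
      (key u hau hub) (key v hav hvb)
    have hD : HasDerivAt (fun s => d + ∫ l, fFun t₀ l s ∂μ)
        (-∫ l, Real.exp (-l * t) ∂μ) t := hG.const_add d
    have heq : deriv ψ =ᶠ[nhds t] fun s => d + ∫ l, fFun t₀ l s ∂μ :=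
      Filter.eventuallyEq_of_mem (hopen.mem_nhds ⟨hat, htb⟩)
        (fun s hs => hderiv s hs.1 hs.2)
    exact hD.congr_of_eventuallyEq heq
  refine ⟨fun t hat htb => ⟨key t hat htb, ?_, keyD2 t hat htb⟩, ?_, ?_⟩
  · have h := (keyD t hat htb).2
    rw [h.deriv]
    exact h
  · have h := (hrep t₀ ht₀a ht₀b).2
    have hz : (fun l => eFun t₀ l t₀ * Real.exp (-l * t₀)) = fun _ => (0:ℝ) := by
      funext l
      rcases eq_or_ne l 0 with rfl | hl
      · simp [eFun]
      · simp [eFun, hl]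
    rw [hz, integral_zero] at h
    rw [h]; ring
  · have h := hderiv t₀ ht₀a ht₀b
    have hz : (fun l => fFun t₀ l t₀) = fun _ => (0:ℝ) := by
      funext l
      rcases eq_or_ne l 0 with rfl | hl
      · simp [fFun]
      · simp [fFun, hl]
    rw [hz, integral_zero] at h
    rw [h]; ring
end

section
/- For 0 < α ≤ 1, the kernel (s,t) ↦ (s+t)^α on [0,∞) is negative definite; and for 1 ≤ α ≤ 2, the kernel (s,t) ↦ −(s+t)^α on [0,∞) is negative definite. -/
open MeasureTheory Real
open Set

-- basic inequalities
lemma one_sub_exp_neg_le (v : ℝ) : 1 - Real.exp (-v) ≤ v := by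
  have := Real.add_one_le_exp (-v); linarith

lemma one_sub_exp_neg_nonneg {v : ℝ} (hv : 0 ≤ v) : 0 ≤ 1 - Real.exp (-v) := by
  have : Real.exp (-v) ≤ 1 := Real.exp_le_one_iff.mpr (by linarith)
  linarith

lemma exp_neg_sub_one_add_nonneg (v : ℝ) : 0 ≤ Real.exp (-v) - 1 + v := by
  have := Real.add_one_le_exp (-v); linarith

lemma exp_neg_sub_one_add_le {v : ℝ} (hv : 0 ≤ v) : Real.exp (-v) - 1 + v ≤ v ^ 2 / 2 := by
  set g : ℝ → ℝ := fun v => v ^ 2 / 2 - (Real.exp (-v) - 1 + v) with hg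
  · have hmono : MonotoneOn g (Ici (0:ℝ)) := by
      have hd : ∀ x : ℝ, HasDerivAt g (x + Real.exp (-x) - 1) x := by
        intro x
        have h1 : HasDerivAt (fun y : ℝ => y ^ 2 / 2) x x := by
          simpa using (hasDerivAt_pow 2 x).div_const 2
        have h2 : HasDerivAt (fun y : ℝ => Real.exp (-y)) (-Real.exp (-x)) x := by
          simpa [Function.comp_def] using (Real.hasDerivAt_exp (-x)).comp x (hasDerivAt_neg x)
        have h3 : HasDerivAt (fun y : ℝ => Real.exp (-y) - 1 + y)
            (-Real.exp (-x) + 1) x := by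
          simpa [Pi.add_def] using ((h2.sub_const 1).add (hasDerivAt_id x))
        simpa [hg, Pi.sub_def] using h1.sub h3 |>.congr_deriv (by ring)
      apply monotoneOn_of_deriv_nonneg (convex_Ici 0)
      · exact (Continuous.continuousOn (by continuity))
      · exact fun x _ => (hd x).differentiableAt.differentiableWithinAt
      · intro x hx
        rw [interior_Ici] at hx
        rw [(hd x).deriv]
        have := Real.add_one_le_exp (-x)
        linarith
    have h0 : g 0 ≤ g v := hmono self_mem_Ici hv hv
    simp [hg] at h0 ⊢
    linarith

lemma integrableOn_of_bounds {f : ℝ → ℝ} (hf : ContinuousOn f (Ioi 0))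
    {p q : ℝ} (hp : -1 < p) (hq : q < -1)
    (h1 : ∀ v ∈ Ioc (0:ℝ) 1, |f v| ≤ v ^ p)
    (h2 : ∀ v ∈ Ici (1:ℝ), |f v| ≤ v ^ q) :
    IntegrableOn f (Ioi 0) := by
  have hs : Ioi (0:ℝ) = Ioc 0 1 ∪ Ioi 1 := (Ioc_union_Ioi_eq_Ioi zero_le_one).symm
  rw [hs]
  apply MeasureTheory.IntegrableOn.union
  · have hint : IntegrableOn (fun v : ℝ => v ^ p) (Ioc (0:ℝ) 1) := by
      rw [← intervalIntegrable_iff_integrableOn_Ioc_of_le zero_le_one]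
      exact intervalIntegral.intervalIntegrable_rpow' hp
    refine Integrable.mono hint ?_ ?_
    · exact (hf.mono Ioc_subset_Ioi_self).aestronglyMeasurable measurableSet_Ioc
    · refine (ae_restrict_iff' measurableSet_Ioc).mpr (ae_of_all _ fun v hv => ?_)
      rw [Real.norm_eq_abs, Real.norm_eq_abs, abs_of_nonneg (Real.rpow_nonneg hv.1.le p)]
      exact h1 v hv
  · have hint : IntegrableOn (fun v : ℝ => v ^ q) (Ioi (1:ℝ)) :=
      integrableOn_Ioi_rpow_of_lt hq one_pos
    refine Integrable.mono hint ?_ ?_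
    · exact (hf.mono (Ioi_subset_Ioi zero_le_one)).aestronglyMeasurable measurableSet_Ioi
    · refine (ae_restrict_iff' measurableSet_Ioi).mpr (ae_of_all _ fun v hv => ?_)
      have hv1 : (1:ℝ) ≤ v := le_of_lt hv
      rw [Real.norm_eq_abs, Real.norm_eq_abs,
        abs_of_nonneg (Real.rpow_nonneg (by linarith) q)]
      exact h2 v hv1

lemma rep_key {α : ℝ} {φ : ℝ → ℝ} {x : ℝ} (h0 : 0 < x) :
    EqOn (fun u : ℝ => φ (x * u) * u ^ (-1 - α))
      (fun u => x ^ (1 + α) * (φ (x * u) * (x * u) ^ (-1 - α))) (Ioi 0) := by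
  intro u hu
  have hu0 : (0:ℝ) < u := hu
  have hxx : x ^ (1 + α) * x ^ (-1 - α) = 1 := by
    rw [← Real.rpow_add h0]; norm_num
  simp only
  rw [Real.mul_rpow h0.le hu0.le]
  calc φ (x * u) * u ^ (-1 - α)
      = (x ^ (1 + α) * x ^ (-1 - α)) * (φ (x * u) * u ^ (-1 - α)) := by rw [hxx, one_mul]
    _ = x ^ (1 + α) * (φ (x * u) * (x ^ (-1 - α) * u ^ (-1 - α))) := by ring

lemma rep_integrable {α : ℝ} {φ : ℝ → ℝ} (hφ0 : φ 0 = 0)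
    (hInt : IntegrableOn (fun v => φ v * v ^ (-1 - α)) (Ioi 0)) {x : ℝ} (hx : 0 ≤ x) :
    IntegrableOn (fun u => φ (x * u) * u ^ (-1 - α)) (Ioi 0) := by
  rcases eq_or_lt_of_le hx with h0 | h0
  · have : EqOn (fun u : ℝ => φ (x * u) * u ^ (-1 - α)) (fun _ => 0) (Ioi 0) := by
      intro u _; simp [← h0, hφ0]
    exact (integrableOn_congr_fun this measurableSet_Ioi).mpr (integrableOn_zero)
  · have hcomp : IntegrableOn (fun u => φ (x * u) * (x * u) ^ (-1 - α)) (Ioi 0) := by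
      have := (integrableOn_Ioi_comp_mul_left_iff
        (fun v => φ v * v ^ (-1 - α)) 0 h0).mpr (by simpa using hInt)
      simpa using this
    exact (integrableOn_congr_fun (rep_key h0) measurableSet_Ioi).mpr (hcomp.const_mul _)

lemma rep_eq {α : ℝ} (hα : 0 < α) {φ : ℝ → ℝ} (hφ0 : φ 0 = 0)
    (hInt : IntegrableOn (fun v => φ v * v ^ (-1 - α)) (Ioi 0)) {x : ℝ} (hx : 0 ≤ x) :
    ∫ u in Ioi (0:ℝ), φ (x * u) * u ^ (-1 - α)
      = x ^ α * ∫ v in Ioi (0:ℝ), φ v * v ^ (-1 - α) := by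
  rcases eq_or_lt_of_le hx with h0 | h0
  · have : EqOn (fun u : ℝ => φ (x * u) * u ^ (-1 - α)) (fun _ => 0) (Ioi 0) := by
      intro u _; simp [← h0, hφ0]
    rw [setIntegral_congr_fun measurableSet_Ioi this, ← h0, Real.zero_rpow hα.ne']
    simp
  · rw [setIntegral_congr_fun measurableSet_Ioi (rep_key h0), MeasureTheory.integral_const_mul,
      integral_comp_mul_left_Ioi (fun v => φ v * v ^ (-1 - α)) 0 h0]
    have hxα : x ^ (1 + α) * x⁻¹ = x ^ α := by
      rw [Real.rpow_add h0, Real.rpow_one]; field_simp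
    rw [mul_zero, smul_eq_mul, ← mul_assoc, hxα]

lemma I_pos {α : ℝ} {φ : ℝ → ℝ} (hpos : ∀ v, 0 < v → 0 < φ v)
    (hInt : IntegrableOn (fun v => φ v * v ^ (-1 - α)) (Ioi 0)) :
    0 < ∫ v in Ioi (0:ℝ), φ v * v ^ (-1 - α) := by
  have hnn : 0 ≤ᵐ[volume.restrict (Ioi (0:ℝ))] fun v => φ v * v ^ (-1 - α) := by
    refine (ae_restrict_iff' measurableSet_Ioi).mpr (ae_of_all _ fun v hv => ?_)
    exact mul_nonneg (hpos v hv).le (Real.rpow_nonneg (le_of_lt hv) _)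
  rw [setIntegral_pos_iff_support_of_nonneg_ae hnn hInt]
  have hsub : Ioi (0:ℝ) ⊆ Function.support fun v => φ v * v ^ (-1 - α) := fun v hv =>
    (mul_pos (hpos v hv) (Real.rpow_pos_of_pos hv _)).ne'
  refine lt_of_lt_of_le ?_ (measure_mono (subset_inter hsub Subset.rfl))
  simp [Real.volume_Ioi]

lemma quad_eq {α : ℝ} (hα : 0 < α) {φ : ℝ → ℝ} (hφ0 : φ 0 = 0)
    (hInt : IntegrableOn (fun v => φ v * v ^ (-1 - α)) (Ioi 0))
    (n : ℕ) (x : Fin n → ℝ) (hx : ∀ i, 0 ≤ x i) (c : Fin n → ℝ) :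
    (∑ i, ∑ j, c i * c j * (x i + x j) ^ α) * (∫ v in Ioi (0:ℝ), φ v * v ^ (-1 - α)) =
      ∫ u in Ioi (0:ℝ), (∑ i, ∑ j, c i * c j * φ ((x i + x j) * u)) * u ^ (-1 - α) := by
  have step1 : ∀ i j : Fin n,
      c i * c j * (x i + x j) ^ α * (∫ v in Ioi (0:ℝ), φ v * v ^ (-1 - α))
        = ∫ u in Ioi (0:ℝ), c i * c j * (φ ((x i + x j) * u) * u ^ (-1 - α)) := by
    intro i j
    rw [MeasureTheory.integral_const_mul,
      rep_eq hα hφ0 hInt (add_nonneg (hx i) (hx j))]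
    ring
  calc (∑ i, ∑ j, c i * c j * (x i + x j) ^ α) * (∫ v in Ioi (0:ℝ), φ v * v ^ (-1 - α))
      = ∑ p : Fin n × Fin n,
          (c p.1 * c p.2 * (x p.1 + x p.2) ^ α * (∫ v in Ioi (0:ℝ), φ v * v ^ (-1 - α))) := by
        rw [Fintype.sum_prod_type, Finset.sum_mul]
        exact Finset.sum_congr rfl fun i _ => by rw [Finset.sum_mul]
    _ = ∑ p : Fin n × Fin n,
          ∫ u in Ioi (0:ℝ), c p.1 * c p.2 * (φ ((x p.1 + x p.2) * u) * u ^ (-1 - α)) :=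
        Finset.sum_congr rfl fun p _ => step1 p.1 p.2
    _ = ∫ u in Ioi (0:ℝ), ∑ p : Fin n × Fin n,
          c p.1 * c p.2 * (φ ((x p.1 + x p.2) * u) * u ^ (-1 - α)) :=
        (MeasureTheory.integral_finset_sum _ fun p _ =>
          ((rep_integrable hφ0 hInt (add_nonneg (hx p.1) (hx p.2))).const_mul _)).symm
    _ = ∫ u in Ioi (0:ℝ), (∑ i, ∑ j, c i * c j * φ ((x i + x j) * u)) * u ^ (-1 - α) := by
        congr 1
        funext u
        rw [Finset.sum_mul, Fintype.sum_prod_type]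
        refine Finset.sum_congr rfl fun i _ => ?_
        rw [Finset.sum_mul]
        exact Finset.sum_congr rfl fun j _ => by ring

lemma alg_split {n : ℕ} (f g : Fin n → ℝ) :
    ∑ i, ∑ j, f i * g j = (∑ i, f i) * (∑ j, g j) := (Finset.sum_mul_sum _ _ _ _).symm

lemma alg_sq {n : ℕ} (c e : Fin n → ℝ) :
    ∑ i, ∑ j, c i * c j * (e i * e j) = (∑ i, c i * e i) ^ 2 := by
  rw [sq, Finset.sum_mul_sum]
  exact Finset.sum_congr rfl fun i _ => Finset.sum_congr rfl fun j _ => by ring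

lemma alg_lin {n : ℕ} (c x : Fin n → ℝ) (hc : ∑ i, c i = 0) :
    ∑ i, ∑ j, c i * c j * (x i + x j) = 0 := by
  have expand : ∀ i j : Fin n, c i * c j * (x i + x j)
      = (c i * x i) * c j + c i * (c j * x j) := fun i j => by ring
  simp_rw [expand, Finset.sum_add_distrib]
  rw [alg_split (fun i => c i * x i) c, alg_split c (fun j => c j * x j), hc]
  ring

lemma alg1 {n : ℕ} (c x : Fin n → ℝ) (hc : ∑ i, c i = 0) (u : ℝ) :
    ∑ i, ∑ j, c i * c j * (1 - Real.exp (-((x i + x j) * u)))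
      = -(∑ i, c i * Real.exp (-(x i * u))) ^ 2 := by
  have expand : ∀ i j : Fin n, c i * c j * (1 - Real.exp (-((x i + x j) * u)))
      = c i * c j - c i * c j * (Real.exp (-(x i * u)) * Real.exp (-(x j * u))) := by
    intro i j
    rw [← Real.exp_add, show -(x i * u) + -(x j * u) = -((x i + x j) * u) by ring]
    ring
  simp_rw [expand, Finset.sum_sub_distrib]
  rw [alg_sq c (fun i => Real.exp (-(x i * u))), alg_split c c, hc]
  ring

lemma alg2 {n : ℕ} (c x : Fin n → ℝ) (hc : ∑ i, c i = 0) (u : ℝ) :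
    ∑ i, ∑ j, c i * c j * (Real.exp (-((x i + x j) * u)) - 1 + (x i + x j) * u)
      = (∑ i, c i * Real.exp (-(x i * u))) ^ 2 := by
  have expand : ∀ i j : Fin n,
      c i * c j * (Real.exp (-((x i + x j) * u)) - 1 + (x i + x j) * u)
      = c i * c j * (Real.exp (-(x i * u)) * Real.exp (-(x j * u)))
        - c i * c j + c i * c j * ((x i + x j) * u) := by
    intro i j
    rw [← Real.exp_add, show -(x i * u) + -(x j * u) = -((x i + x j) * u) by ring]
    ring
  have hlin : ∑ i, ∑ j, c i * c j * ((x i + x j) * u) = 0 := by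
    simp_rw [show ∀ i j : Fin n, c i * c j * ((x i + x j) * u)
      = c i * c j * (x i + x j) * u from fun i j => by ring, ← Finset.sum_mul]
    rw [alg_lin c x hc, zero_mul]
  simp_rw [expand, Finset.sum_add_distrib, Finset.sum_sub_distrib]
  rw [alg_sq c (fun i => Real.exp (-(x i * u))), alg_split c c, hc, hlin]
  ring

lemma alg_two {n : ℕ} (c x : Fin n → ℝ) (hc : ∑ i, c i = 0) :
    ∑ i, ∑ j, c i * c j * (x i + x j) ^ 2 = 2 * (∑ i, c i * x i) ^ 2 := by
  have expand : ∀ i j : Fin n, c i * c j * (x i + x j) ^ 2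
      = (c i * x i ^ 2) * c j + (2 * (c i * x i)) * (c j * x j)
        + c i * (c j * x j ^ 2) := fun i j => by ring
  simp_rw [expand, Finset.sum_add_distrib]
  rw [alg_split (fun i => c i * x i ^ 2) c, alg_split (fun i => 2 * (c i * x i)) _,
    alg_split c (fun j => c j * x j ^ 2), hc, ← Finset.mul_sum]
  ring

lemma hInt1 {α : ℝ} (hα0 : 0 < α) (hα1 : α < 1) :
    IntegrableOn (fun v => (1 - Real.exp (-v)) * v ^ (-1 - α)) (Ioi 0) := by
  apply integrableOn_of_bounds (p := -α) (q := -1 - α) ?_ (by linarith) (by linarith)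
  · intro v hv
    have hv0 : (0:ℝ) < v := hv.1
    rw [abs_of_nonneg (mul_nonneg (one_sub_exp_neg_nonneg hv0.le)
      (Real.rpow_nonneg hv0.le _))]
    calc (1 - Real.exp (-v)) * v ^ (-1 - α)
        ≤ v * v ^ (-1 - α) :=
          mul_le_mul_of_nonneg_right (one_sub_exp_neg_le v) (Real.rpow_nonneg hv0.le _)
      _ = v ^ (-α) := by
          rw [show v * v ^ (-1 - α) = v ^ ((1:ℝ) + (-1 - α)) by
            rw [Real.rpow_add hv0, Real.rpow_one]]
          congr 1; ring
  · intro v hv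
    have hv0 : (0:ℝ) < v := lt_of_lt_of_le one_pos hv
    rw [abs_of_nonneg (mul_nonneg (one_sub_exp_neg_nonneg hv0.le)
      (Real.rpow_nonneg hv0.le _))]
    have h1 : 1 - Real.exp (-v) ≤ 1 := by
      have := Real.exp_pos (-v); linarith
    calc (1 - Real.exp (-v)) * v ^ (-1 - α)
        ≤ 1 * v ^ (-1 - α) :=
          mul_le_mul_of_nonneg_right h1 (Real.rpow_nonneg hv0.le _)
      _ = v ^ (-1 - α) := one_mul _
  · exact ((continuous_const.sub (Real.continuous_exp.comp continuous_neg)).continuousOn).mul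
      (continuousOn_id.rpow_const fun x hx => Or.inl (ne_of_gt hx))

lemma hInt2 {α : ℝ} (hα1 : 1 < α) (hα2 : α < 2) :
    IntegrableOn (fun v => (Real.exp (-v) - 1 + v) * v ^ (-1 - α)) (Ioi 0) := by
  apply integrableOn_of_bounds (p := 1 - α) (q := -α) ?_ (by linarith) (by linarith)
  · intro v hv
    have hv0 : (0:ℝ) < v := hv.1
    rw [abs_of_nonneg (mul_nonneg (exp_neg_sub_one_add_nonneg v)
      (Real.rpow_nonneg hv0.le _))]
    calc (Real.exp (-v) - 1 + v) * v ^ (-1 - α)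
        ≤ (v ^ 2) * v ^ (-1 - α) := by
          refine mul_le_mul_of_nonneg_right ?_ (Real.rpow_nonneg hv0.le _)
          have := exp_neg_sub_one_add_le hv0.le
          nlinarith [sq_nonneg v]
      _ = v ^ (1 - α) := by
          rw [← Real.rpow_natCast v 2, ← Real.rpow_add hv0]
          congr 1; push_cast; ring
  · intro v hv
    have hv0 : (0:ℝ) < v := lt_of_lt_of_le one_pos hv
    rw [abs_of_nonneg (mul_nonneg (exp_neg_sub_one_add_nonneg v)
      (Real.rpow_nonneg hv0.le _))]
    have h1 : Real.exp (-v) - 1 + v ≤ v := by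
      have : Real.exp (-v) ≤ 1 := Real.exp_le_one_iff.mpr (by linarith)
      linarith
    calc (Real.exp (-v) - 1 + v) * v ^ (-1 - α)
        ≤ v * v ^ (-1 - α) :=
          mul_le_mul_of_nonneg_right h1 (Real.rpow_nonneg hv0.le _)
      _ = v ^ (-α) := by
          rw [show v * v ^ (-1 - α) = v ^ ((1:ℝ) + (-1 - α)) by
            rw [Real.rpow_add hv0, Real.rpow_one]]
          congr 1; ring
  · exact (((Real.continuous_exp.comp continuous_neg).sub continuous_const).add
      continuous_id).continuousOn.mul
      (continuousOn_id.rpow_const fun x hx => Or.inl (ne_of_gt hx))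


/-- A kernel `K` on a subset `S` is negative definite if it is symmetric on `S` and
all quadratic forms built from finitely many points of `S` with coefficients summing
to zero are nonpositive. -/
def NegDefKernel {α : Type*} (S : Set α) (K : α → α → ℝ) : Prop :=
  (∀ x ∈ S, ∀ y ∈ S, K x y = K y x) ∧
  ∀ (n : ℕ) (x : Fin n → α), (∀ i, x i ∈ S) →
    ∀ c : Fin n → ℝ, (∑ i, c i = 0) →
      ∑ i, ∑ j, c i * c j * K (x i) (x j) ≤ 0

/-- For `0 < α ≤ 1` the kernel `(s,t) ↦ (s+t)^α` on `[0,∞)` is negative definite,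
and for `1 ≤ α ≤ 2` the kernel `(s,t) ↦ -(s+t)^α` on `[0,∞)` is negative
definite. -/
theorem negDef_power_kernels (α : ℝ) :
    (0 < α → α ≤ 1 →
      NegDefKernel (Set.Ici (0 : ℝ)) (fun s t => (s + t) ^ α)) ∧
    (1 ≤ α → α ≤ 2 →
      NegDefKernel (Set.Ici (0 : ℝ)) (fun s t => -((s + t) ^ α))) := by
  constructor
  · intro hα0 hα1
    refine ⟨fun x _ y _ => by simp only []; rw [add_comm], ?_⟩
    intro n x hx c hc
    have hx' : ∀ i, 0 ≤ x i := hx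
    simp only []
    rcases eq_or_lt_of_le hα1 with h1 | h1
    · subst h1
      simp only [Real.rpow_one]
      exact le_of_eq (alg_lin c x hc)
    · set φ : ℝ → ℝ := fun v => 1 - Real.exp (-v) with hφ
      have hφ0 : φ 0 = 0 := by simp [hφ]
      have hInt : IntegrableOn (fun v => φ v * v ^ (-1 - α)) (Ioi 0) := hInt1 hα0 h1
      have hIpos : 0 < ∫ v in Ioi (0:ℝ), φ v * v ^ (-1 - α) := by
        refine I_pos (fun v hv => ?_) hInt
        have : Real.exp (-v) < 1 := Real.exp_lt_one_iff.mpr (by linarith)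
        simp only [hφ]; linarith
      have hquad := quad_eq hα0 hφ0 hInt n x hx' c
      have hle : (∫ u in Ioi (0:ℝ),
          (∑ i, ∑ j, c i * c j * φ ((x i + x j) * u)) * u ^ (-1 - α)) ≤ 0 := by
        refine MeasureTheory.integral_nonpos_of_ae
          ((ae_restrict_iff' measurableSet_Ioi).mpr (ae_of_all _ fun u hu => ?_))
        have hsum : ∑ i, ∑ j, c i * c j * φ ((x i + x j) * u)
            = -(∑ i, c i * Real.exp (-(x i * u))) ^ 2 := alg1 c x hc u
        show (∑ i, ∑ j, c i * c j * φ ((x i + x j) * u)) * u ^ (-1 - α) ≤ 0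
        rw [hsum]
        exact mul_nonpos_of_nonpos_of_nonneg (neg_nonpos.mpr (sq_nonneg _))
          (Real.rpow_nonneg (le_of_lt hu) _)
      by_contra hS
      push_neg at hS
      nlinarith [hquad, hIpos, hle]
  · intro hα1 hα2
    refine ⟨fun x _ y _ => by simp only []; rw [add_comm], ?_⟩
    intro n x hx c hc
    have hx' : ∀ i, 0 ≤ x i := hx
    simp only [mul_neg]
    rw [Finset.sum_congr rfl fun i (_ : i ∈ Finset.univ) => Finset.sum_neg_distrib _,
      Finset.sum_neg_distrib, neg_nonpos]
    rcases eq_or_lt_of_le hα1 with h1 | h1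
    · rw [← h1]
      simp only [Real.rpow_one]
      exact ge_of_eq (alg_lin c x hc)
    rcases eq_or_lt_of_le hα2 with h2 | h2
    · subst h2
      have hpow : ∀ s : ℝ, s ^ (2:ℝ) = s ^ (2:ℕ) := fun s => by
        rw [← Real.rpow_natCast]; norm_num
      simp_rw [hpow]
      rw [alg_two c x hc]
      positivity
    · have hα0 : 0 < α := lt_trans one_pos h1
      set φ : ℝ → ℝ := fun v => Real.exp (-v) - 1 + v with hφ
      have hφ0 : φ 0 = 0 := by simp [hφ]
      have hInt : IntegrableOn (fun v => φ v * v ^ (-1 - α)) (Ioi 0) := hInt2 h1 h2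
      have hIpos : 0 < ∫ v in Ioi (0:ℝ), φ v * v ^ (-1 - α) := by
        refine I_pos (fun v hv => ?_) hInt
        have := Real.add_one_lt_exp (x := -v) (by linarith)
        simp only [hφ]; linarith
      have hquad := quad_eq hα0 hφ0 hInt n x hx' c
      have hge : 0 ≤ (∫ u in Ioi (0:ℝ),
          (∑ i, ∑ j, c i * c j * φ ((x i + x j) * u)) * u ^ (-1 - α)) := by
        refine setIntegral_nonneg measurableSet_Ioi fun u hu => ?_
        have hsum : ∑ i, ∑ j, c i * c j * φ ((x i + x j) * u)
            = (∑ i, c i * Real.exp (-(x i * u))) ^ 2 := alg2 c x hc u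
        show 0 ≤ (∑ i, ∑ j, c i * c j * φ ((x i + x j) * u)) * u ^ (-1 - α)
        rw [hsum]
        exact mul_nonneg (sq_nonneg _) (Real.rpow_nonneg (le_of_lt hu) _)
      by_contra hS
      push_neg at hS
      nlinarith [hquad, hIpos, hge]
end

section
/- For α ≥ 0, the function ψ(t) = |t|^α on ℝ is reflection negative with respect to (ℝ, ℝ₊, −id), i.e., the kernel (x,y) ↦ |x−y|^α on ℝ is negative definite and the kernel (s,t) ↦ (s+t)^α on (0,∞) is negative definite, if and only if α ≤ 1. -/
open MeasureTheory Real Set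

lemma aux_integrableOn {f : ℝ → ℝ} (hm : Measurable f) {C1 C2 a b : ℝ}
    (ha : -1 < a) (hb : b < -1)
    (h1 : ∀ l ∈ Ioc (0:ℝ) 1, ‖f l‖ ≤ C1 * l ^ a)
    (h2 : ∀ l ∈ Ioi (1:ℝ), ‖f l‖ ≤ C2 * l ^ b) :
    IntegrableOn f (Ioi (0:ℝ)) := by
  rw [← Ioc_union_Ioi_eq_Ioi (zero_le_one (α := ℝ))]
  apply IntegrableOn.union
  · have hg : IntegrableOn (fun l : ℝ => C1 * l ^ a) (Ioc (0:ℝ) 1) := by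
      rw [integrableOn_Ioc_iff_integrableOn_Ioo]
      exact ((intervalIntegral.integrableOn_Ioo_rpow_iff one_pos).2 ha).const_mul C1
    exact Integrable.mono' hg hm.aestronglyMeasurable
      ((ae_restrict_iff' measurableSet_Ioc).2 (Filter.Eventually.of_forall h1))
  · have hg : IntegrableOn (fun l : ℝ => C2 * l ^ b) (Ioi (1:ℝ)) :=
      (integrableOn_Ioi_rpow_of_lt hb one_pos).const_mul C2
    exact Integrable.mono' hg hm.aestronglyMeasurable
      ((ae_restrict_iff' measurableSet_Ioi).2 (Filter.Eventually.of_forall h2))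

lemma aux_scale {α : ℝ} (g : ℝ → ℝ) {s : ℝ} (hs : 0 < s) :
    ∫ l in Ioi (0:ℝ), (1 - g (s * l)) * l ^ (-1-α)
      = s ^ α * ∫ l in Ioi (0:ℝ), (1 - g l) * l ^ (-1-α) := by
  have h := integral_comp_mul_left_Ioi (fun u => (1 - g u) * u ^ (-1-α)) 0 hs
  rw [mul_zero] at h
  have hss : s ^ (1+α) * s ^ (-1-α) = 1 := by
    rw [← Real.rpow_add hs]; norm_num
  have congr1 : ∫ l in Ioi (0:ℝ), (1 - g (s*l)) * l ^ (-1-α)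
      = ∫ l in Ioi (0:ℝ), s ^ (1+α) * ((1 - g (s*l)) * (s*l) ^ (-1-α)) := by
    apply setIntegral_congr_fun measurableSet_Ioi
    intro l hl
    simp only
    rw [Real.mul_rpow hs.le (le_of_lt hl)]
    linear_combination (-((1 - g (s*l)) * l ^ (-1-α))) * hss
  rw [congr1, MeasureTheory.integral_const_mul, h, smul_eq_mul, ← mul_assoc]
  congr 1
  rw [← Real.rpow_neg_one s, ← Real.rpow_add hs]
  norm_num

lemma aux_integrable_exp {α : ℝ} (hα0 : 0 < α) (hα1 : α < 1) {t : ℝ} (ht : 0 ≤ t) :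
    IntegrableOn (fun l => (1 - Real.exp (-(t * l))) * l ^ (-1-α)) (Ioi (0:ℝ)) := by
  have hm : Measurable fun l : ℝ => (1 - Real.exp (-(t * l))) * l ^ (-1-α) := by
    fun_prop
  apply aux_integrableOn hm (a := -α) (b := -1-α) (C1 := t) (C2 := 2)
    (by linarith) (by linarith)
  · intro l hl
    have hl0 : 0 < l := hl.1
    have he1 : Real.exp (-(t * l)) ≤ 1 :=
      Real.exp_le_one_iff.2 (by nlinarith)
    have he2 : 1 - Real.exp (-(t * l)) ≤ t * l := by
      nlinarith [Real.add_one_le_exp (-(t * l))]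
    have hp : (0:ℝ) ≤ l ^ (-1-α) := Real.rpow_nonneg hl0.le _
    rw [Real.norm_eq_abs, abs_of_nonneg (by nlinarith)]
    calc (1 - Real.exp (-(t * l))) * l ^ (-1-α) ≤ (t * l) * l ^ (-1-α) := by nlinarith
      _ = t * l ^ (-α) := by
          rw [mul_assoc]
          congr 1
          have h2 := (Real.rpow_add hl0 1 (-1-α)).symm
          rw [Real.rpow_one] at h2
          rw [h2]
          congr 1
          ring
  · intro l hl
    have hl0 : (0:ℝ) < l := lt_trans one_pos hl
    have he1 : Real.exp (-(t * l)) ≤ 1 :=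
      Real.exp_le_one_iff.2 (by nlinarith)
    have hp : (0:ℝ) ≤ l ^ (-1-α) := Real.rpow_nonneg hl0.le _
    rw [Real.norm_eq_abs, abs_of_nonneg (by nlinarith)]
    nlinarith [Real.exp_pos (-(t * l))]

lemma aux_integrable_cos {α : ℝ} (hα0 : 0 < α) (hα2 : α < 2) (t : ℝ) :
    IntegrableOn (fun l => (1 - Real.cos (t * l)) * l ^ (-1-α)) (Ioi (0:ℝ)) := by
  have hm : Measurable fun l : ℝ => (1 - Real.cos (t * l)) * l ^ (-1-α) := by
    fun_prop
  apply aux_integrableOn hm (a := 1-α) (b := -1-α) (C1 := t^2/2) (C2 := 2)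
    (by linarith) (by linarith)
  · intro l hl
    have hl0 : 0 < l := hl.1
    have hc1 : Real.cos (t * l) ≤ 1 := Real.cos_le_one _
    have hc2 : 1 - Real.cos (t * l) ≤ (t * l)^2 / 2 := by
      nlinarith [Real.one_sub_sq_div_two_le_cos (x := t * l)]
    have hp : (0:ℝ) ≤ l ^ (-1-α) := Real.rpow_nonneg hl0.le _
    rw [Real.norm_eq_abs, abs_of_nonneg (by nlinarith)]
    calc (1 - Real.cos (t * l)) * l ^ (-1-α) ≤ ((t * l)^2 / 2) * l ^ (-1-α) := by nlinarith
      _ = t^2/2 * l ^ (1-α) := by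
          have : l^(2:ℕ) * l ^ (-1-α) = l ^ (1-α) := by
            rw [← Real.rpow_natCast l 2, ← Real.rpow_add hl0]
            congr 1
            push_cast
            ring
          nlinarith [this]
  · intro l hl
    have hl0 : (0:ℝ) < l := lt_trans one_pos hl
    have hc1 : Real.cos (t * l) ≤ 1 := Real.cos_le_one _
    have hc2 : -1 ≤ Real.cos (t * l) := Real.neg_one_le_cos _
    have hp : (0:ℝ) ≤ l ^ (-1-α) := Real.rpow_nonneg hl0.le _
    rw [Real.norm_eq_abs, abs_of_nonneg (by nlinarith)]
    nlinarith

lemma aux_pos_aux {f : ℝ → ℝ} (hf : IntegrableOn f (Ioi (0:ℝ)))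
    (hnn : ∀ l ∈ Ioi (0:ℝ), 0 ≤ f l) {c : ℝ} (hc : 0 < c)
    (hbd : ∀ l ∈ Ioc (1:ℝ) 2, c ≤ f l) :
    0 < ∫ l in Ioi (0:ℝ), f l := by
  have hsub : Ioc (1:ℝ) 2 ⊆ Ioi 0 := fun x hx => lt_trans one_pos hx.1
  have h1 : ∫ l in Ioc (1:ℝ) 2, f l ≤ ∫ l in Ioi (0:ℝ), f l := by
    apply setIntegral_mono_set hf
    · exact (ae_restrict_iff' measurableSet_Ioi).2 (Filter.Eventually.of_forall hnn)
    · exact Filter.Eventually.of_forall hsub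
  have h2 : c * (volume (Ioc (1:ℝ) 2)).toReal ≤ ∫ l in Ioc (1:ℝ) 2, f l := by
    apply setIntegral_ge_of_const_le_real measurableSet_Ioc
    · rw [Real.volume_Ioc]; exact ENNReal.ofReal_ne_top
    · exact hbd
    · exact hf.mono_set hsub
  rw [Real.volume_Ioc] at h2
  rw [ENNReal.toReal_ofReal (by norm_num)] at h2
  calc (0:ℝ) < c * (2 - 1) := by linarith
    _ ≤ ∫ l in Ioc (1:ℝ) 2, f l := h2
    _ ≤ _ := h1

lemma aux_rpow_Ioc {α l : ℝ} (hα : 0 ≤ α) (hl : l ∈ Ioc (1:ℝ) 2) :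
    (2:ℝ) ^ (-1-α) ≤ l ^ (-1-α) :=
  Real.rpow_le_rpow_of_nonpos (lt_trans one_pos hl.1) hl.2 (by linarith)

lemma aux_exp_pos {α : ℝ} (hα0 : 0 < α) (hα1 : α < 1) :
    0 < ∫ l in Ioi (0:ℝ), (1 - Real.exp (-l)) * l ^ (-1-α) := by
  have h2pos : (0:ℝ) < (2:ℝ) ^ (-1-α) := Real.rpow_pos_of_pos two_pos _
  apply aux_pos_aux (f := fun l => (1 - Real.exp (-l)) * l ^ (-1-α)) (c := (1 - Real.exp (-1)) * 2 ^ (-1-α))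
  · simpa using aux_integrable_exp hα0 hα1 (zero_le_one (α := ℝ))
  · intro l hl
    have hl0 : (0:ℝ) < l := hl
    have := Real.exp_le_one_iff.2 (by linarith : -l ≤ 0)
    exact mul_nonneg (by linarith) (Real.rpow_nonneg hl0.le _)
  · have : Real.exp (-1) < 1 := Real.exp_lt_one_iff.2 (by norm_num)
    exact mul_pos (by linarith) h2pos
  · intro l hl
    have he : Real.exp (-l) ≤ Real.exp (-1) := Real.exp_le_exp.2 (by linarith [hl.1])
    have he1 : Real.exp (-1) < 1 := Real.exp_lt_one_iff.2 (by norm_num)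
    exact mul_le_mul (by linarith) (aux_rpow_Ioc hα0.le hl) h2pos.le (by linarith)

lemma aux_cos_pos {α : ℝ} (hα0 : 0 < α) (hα2 : α < 2) :
    0 < ∫ l in Ioi (0:ℝ), (1 - Real.cos l) * l ^ (-1-α) := by
  have h2pos : (0:ℝ) < (2:ℝ) ^ (-1-α) := Real.rpow_pos_of_pos two_pos _
  have hc1 : Real.cos 1 ≤ 2/3 := le_trans Real.cos_one_le (by norm_num)
  apply aux_pos_aux (f := fun l => (1 - Real.cos l) * l ^ (-1-α)) (c := (1 - Real.cos 1) * 2 ^ (-1-α))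
  · simpa using aux_integrable_cos hα0 hα2 1
  · intro l hl
    have hl0 : (0:ℝ) < l := hl
    exact mul_nonneg (by nlinarith [Real.cos_le_one l]) (Real.rpow_nonneg hl0.le _)
  · exact mul_pos (by linarith) h2pos
  · intro l hl
    have hlpi : l ≤ π := by nlinarith [Real.pi_gt_three, hl.2]
    have hcl : Real.cos l ≤ Real.cos 1 :=
      Real.cos_le_cos_of_nonneg_of_le_pi zero_le_one hlpi hl.1.le
    exact mul_le_mul (by linarith) (aux_rpow_Ioc hα0.le hl) h2pos.le (by nlinarith)

lemma aux_alg {n : ℕ} (c e : Fin n → ℝ) (P : ℝ) :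
    ∑ i, ∑ j, c i * c j * ((1 - e i * e j) * P)
      = ((∑ i, c i) * (∑ i, c i) - (∑ i, c i * e i) * (∑ i, c i * e i)) * P := by
  rw [sub_mul, Finset.sum_mul_sum, Finset.sum_mul_sum, Finset.sum_mul, Finset.sum_mul,
    ← Finset.sum_sub_distrib]
  refine Finset.sum_congr rfl fun i _ => ?_
  rw [Finset.sum_mul, Finset.sum_mul, ← Finset.sum_sub_distrib]
  exact Finset.sum_congr rfl fun j _ => by ring

lemma aux_alg2 {n : ℕ} (c a b : Fin n → ℝ) (P : ℝ) :
    ∑ i, ∑ j, c i * c j * ((1 - (a i * a j + b i * b j)) * P)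
      = ((∑ i, c i) * (∑ i, c i) - (∑ i, c i * a i) * (∑ i, c i * a i)
          - (∑ i, c i * b i) * (∑ i, c i * b i)) * P := by
  rw [sub_mul, sub_mul, Finset.sum_mul_sum, Finset.sum_mul_sum, Finset.sum_mul_sum,
    Finset.sum_mul, Finset.sum_mul, Finset.sum_mul, ← Finset.sum_sub_distrib,
    ← Finset.sum_sub_distrib]
  refine Finset.sum_congr rfl fun i _ => ?_
  rw [Finset.sum_mul, Finset.sum_mul, Finset.sum_mul, ← Finset.sum_sub_distrib,
    ← Finset.sum_sub_distrib]
  exact Finset.sum_congr rfl fun j _ => by ring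

lemma aux_rep_cos {α : ℝ} (hα0 : 0 < α) (t : ℝ) :
    ∫ l in Ioi (0:ℝ), (1 - Real.cos (t * l)) * l ^ (-1-α)
      = |t| ^ α * ∫ l in Ioi (0:ℝ), (1 - Real.cos l) * l ^ (-1-α) := by
  rcases eq_or_ne t 0 with rfl | ht
  · simp [Real.zero_rpow hα0.ne']
  · have habs : 0 < |t| := abs_pos.2 ht
    have h1 : ∫ l in Ioi (0:ℝ), (1 - Real.cos (t * l)) * l ^ (-1-α)
        = ∫ l in Ioi (0:ℝ), (1 - Real.cos (|t| * l)) * l ^ (-1-α) := by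
      apply setIntegral_congr_fun measurableSet_Ioi
      intro l _
      simp only
      rcases abs_cases t with ⟨h, _⟩ | ⟨h, _⟩
      · rw [h]
      · rw [h, neg_mul, Real.cos_neg]
    have h2 := aux_scale (α := α) (fun u => Real.cos u) habs
    rw [h1, h2]

lemma quad_exp {α : ℝ} (hα0 : 0 < α) (hα1 : α < 1) (n : ℕ) (x : Fin n → ℝ)
    (hx : ∀ i, x i ∈ Ioi (0:ℝ)) (c : Fin n → ℝ) (hc : ∑ i, c i = 0) :
    ∑ i, ∑ j, c i * c j * (x i + x j) ^ α ≤ 0 := by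
  set I1 := ∫ l in Ioi (0:ℝ), (1 - Real.exp (-l)) * l ^ (-1-α) with hI1def
  have hI1 : 0 < I1 := aux_exp_pos hα0 hα1
  have hxi : ∀ i, 0 < x i := fun i => hx i
  have hIng : ∀ i j : Fin n, Integrable
      (fun l => c i * c j * ((1 - Real.exp (-((x i + x j) * l))) * l ^ (-1-α)))
      (volume.restrict (Ioi (0:ℝ))) := by
    intro i j
    exact (aux_integrable_exp hα0 hα1 (add_pos (hxi i) (hxi j)).le).const_mul _
  have step1 : ∀ i j : Fin n, c i * c j * (x i + x j) ^ α
      = (∫ l in Ioi (0:ℝ),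
          c i * c j * ((1 - Real.exp (-((x i + x j) * l))) * l ^ (-1-α))) / I1 := by
    intro i j
    have hs := aux_scale (α := α) (fun u => Real.exp (-u)) (add_pos (hxi i) (hxi j))
    rw [MeasureTheory.integral_const_mul, hs, ← hI1def]
    field_simp
  have e1 : ∑ i, ∑ j, c i * c j * (x i + x j) ^ α
      = (∑ i, ∑ j, ∫ l in Ioi (0:ℝ),
          c i * c j * ((1 - Real.exp (-((x i + x j) * l))) * l ^ (-1-α))) / I1 := by
    rw [Finset.sum_div]
    refine Finset.sum_congr rfl fun i _ => ?_
    rw [Finset.sum_div]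
    exact Finset.sum_congr rfl fun j _ => step1 i j
  have e2 : ∀ i : Fin n, ∑ j, (∫ l in Ioi (0:ℝ),
        c i * c j * ((1 - Real.exp (-((x i + x j) * l))) * l ^ (-1-α)))
      = ∫ l in Ioi (0:ℝ), ∑ j,
        c i * c j * ((1 - Real.exp (-((x i + x j) * l))) * l ^ (-1-α)) := fun i =>
    (MeasureTheory.integral_finset_sum _ (fun j _ => hIng i j)).symm
  have e3 : ∑ i, (∫ l in Ioi (0:ℝ), ∑ j,
        c i * c j * ((1 - Real.exp (-((x i + x j) * l))) * l ^ (-1-α)))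
      = ∫ l in Ioi (0:ℝ), ∑ i, ∑ j,
        c i * c j * ((1 - Real.exp (-((x i + x j) * l))) * l ^ (-1-α)) :=
    (MeasureTheory.integral_finset_sum _
      (fun i _ => integrable_finset_sum _ (fun j _ => hIng i j))).symm
  rw [e1]
  simp only [e2]
  rw [e3]
  apply div_nonpos_of_nonpos_of_nonneg _ hI1.le
  apply setIntegral_nonpos measurableSet_Ioi
  intro l hl
  have hl0 : (0:ℝ) < l := hl
  have hP : (0:ℝ) ≤ l ^ (-1-α) := Real.rpow_nonneg hl0.le _
  have hterm : ∀ i j : Fin n,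
      c i * c j * ((1 - Real.exp (-((x i + x j) * l))) * l ^ (-1-α))
      = c i * c j * ((1 - Real.exp (-(x i * l)) * Real.exp (-(x j * l))) * l ^ (-1-α)) := by
    intro i j
    rw [← Real.exp_add]
    congr 3
    ring
  calc ∑ i, ∑ j, c i * c j * ((1 - Real.exp (-((x i + x j) * l))) * l ^ (-1-α))
      = ∑ i, ∑ j, c i * c j *
          ((1 - Real.exp (-(x i * l)) * Real.exp (-(x j * l))) * l ^ (-1-α)) := by
        exact Finset.sum_congr rfl fun i _ => Finset.sum_congr rfl fun j _ => hterm i j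
    _ = ((∑ i, c i) * (∑ i, c i)
          - (∑ i, c i * Real.exp (-(x i * l))) * (∑ i, c i * Real.exp (-(x i * l))))
            * l ^ (-1-α) := aux_alg c _ _
    _ ≤ 0 := by
        rw [hc]
        nlinarith [sq_nonneg (∑ i, c i * Real.exp (-(x i * l)))]

lemma quad_abs {α : ℝ} (hα0 : 0 < α) (hα2 : α < 2) (n : ℕ) (x : Fin n → ℝ)
    (c : Fin n → ℝ) (hc : ∑ i, c i = 0) :
    ∑ i, ∑ j, c i * c j * |x i - x j| ^ α ≤ 0 := by
  set J1 := ∫ l in Ioi (0:ℝ), (1 - Real.cos l) * l ^ (-1-α) with hJ1def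
  have hJ1 : 0 < J1 := aux_cos_pos hα0 hα2
  have hIng : ∀ i j : Fin n, Integrable
      (fun l => c i * c j * ((1 - Real.cos ((x i - x j) * l)) * l ^ (-1-α)))
      (volume.restrict (Ioi (0:ℝ))) := by
    intro i j
    exact (aux_integrable_cos hα0 hα2 (x i - x j)).const_mul _
  have step1 : ∀ i j : Fin n, c i * c j * |x i - x j| ^ α
      = (∫ l in Ioi (0:ℝ),
          c i * c j * ((1 - Real.cos ((x i - x j) * l)) * l ^ (-1-α))) / J1 := by
    intro i j
    rw [MeasureTheory.integral_const_mul, aux_rep_cos hα0 (x i - x j), ← hJ1def]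
    field_simp
  have e1 : ∑ i, ∑ j, c i * c j * |x i - x j| ^ α
      = (∑ i, ∑ j, ∫ l in Ioi (0:ℝ),
          c i * c j * ((1 - Real.cos ((x i - x j) * l)) * l ^ (-1-α))) / J1 := by
    rw [Finset.sum_div]
    refine Finset.sum_congr rfl fun i _ => ?_
    rw [Finset.sum_div]
    exact Finset.sum_congr rfl fun j _ => step1 i j
  have e2 : ∀ i : Fin n, ∑ j, (∫ l in Ioi (0:ℝ),
        c i * c j * ((1 - Real.cos ((x i - x j) * l)) * l ^ (-1-α)))
      = ∫ l in Ioi (0:ℝ), ∑ j,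
        c i * c j * ((1 - Real.cos ((x i - x j) * l)) * l ^ (-1-α)) := fun i =>
    (MeasureTheory.integral_finset_sum _ (fun j _ => hIng i j)).symm
  have e3 : ∑ i, (∫ l in Ioi (0:ℝ), ∑ j,
        c i * c j * ((1 - Real.cos ((x i - x j) * l)) * l ^ (-1-α)))
      = ∫ l in Ioi (0:ℝ), ∑ i, ∑ j,
        c i * c j * ((1 - Real.cos ((x i - x j) * l)) * l ^ (-1-α)) :=
    (MeasureTheory.integral_finset_sum _
      (fun i _ => integrable_finset_sum _ (fun j _ => hIng i j))).symm
  rw [e1]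
  simp only [e2]
  rw [e3]
  apply div_nonpos_of_nonpos_of_nonneg _ hJ1.le
  apply setIntegral_nonpos measurableSet_Ioi
  intro l hl
  have hl0 : (0:ℝ) < l := hl
  have hP : (0:ℝ) ≤ l ^ (-1-α) := Real.rpow_nonneg hl0.le _
  have hterm : ∀ i j : Fin n,
      c i * c j * ((1 - Real.cos ((x i - x j) * l)) * l ^ (-1-α))
      = c i * c j * ((1 - (Real.cos (x i * l) * Real.cos (x j * l)
          + Real.sin (x i * l) * Real.sin (x j * l))) * l ^ (-1-α)) := by
    intro i j
    rw [show (x i - x j) * l = x i * l - x j * l by ring, Real.cos_sub]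
  calc ∑ i, ∑ j, c i * c j * ((1 - Real.cos ((x i - x j) * l)) * l ^ (-1-α))
      = ∑ i, ∑ j, c i * c j * ((1 - (Real.cos (x i * l) * Real.cos (x j * l)
          + Real.sin (x i * l) * Real.sin (x j * l))) * l ^ (-1-α)) :=
        Finset.sum_congr rfl fun i _ => Finset.sum_congr rfl fun j _ => hterm i j
    _ = ((∑ i, c i) * (∑ i, c i)
          - (∑ i, c i * Real.cos (x i * l)) * (∑ i, c i * Real.cos (x i * l))
          - (∑ i, c i * Real.sin (x i * l)) * (∑ i, c i * Real.sin (x i * l)))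
            * l ^ (-1-α) := aux_alg2 c _ _ _
    _ ≤ 0 := by
        rw [hc]
        nlinarith [sq_nonneg (∑ i, c i * Real.cos (x i * l)),
          sq_nonneg (∑ i, c i * Real.sin (x i * l))]

lemma quad_zero {n : ℕ} (c : Fin n → ℝ) (hc : ∑ i, c i = 0) :
    ∑ i : Fin n, ∑ j : Fin n, c i * c j * 1 ≤ 0 := by
  simp only [mul_one]
  rw [← Finset.sum_mul_sum, hc, zero_mul]

lemma quad_lin {n : ℕ} (x c : Fin n → ℝ) (hc : ∑ i, c i = 0) :
    ∑ i, ∑ j, c i * c j * (x i + x j) ≤ 0 := by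
  have h : ∀ i, ∑ j, c i * c j * (x i + x j)
      = c i * x i * (∑ j, c j) + c i * (∑ j, c j * x j) := by
    intro i
    rw [Finset.mul_sum, Finset.mul_sum, ← Finset.sum_add_distrib]
    exact Finset.sum_congr rfl fun j _ => by ring
  simp only [h, hc, mul_zero, zero_add]
  rw [← Finset.sum_mul, hc, zero_mul]

/-- For `α ≥ 0`, the function `ψ(t) = |t|^α` is reflection negative with respect to
`(ℝ, ℝ₊, -id)`, i.e. the kernel `(x,y) ↦ |x-y|^α` on `ℝ` is negative definite and
the kernel `(s,t) ↦ (s+t)^α` on `(0,∞)` is negative definite, if and only if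
`α ≤ 1`. -/
theorem abs_rpow_reflection_negative_iff (α : ℝ) (hα : 0 ≤ α) :
    (NegDefKernel (Set.univ : Set ℝ) (fun x y => |x - y| ^ α) ∧
      NegDefKernel (Set.Ioi (0 : ℝ)) (fun s t => (s + t) ^ α)) ↔ α ≤ 1 := by
  constructor
  · rintro ⟨-, h2⟩
    by_contra hgt
    push_neg at hgt
    have key := h2.2 2 ![1, 2] (by intro i; fin_cases i <;> norm_num)
      ![1, -1] (by simp [Fin.sum_univ_two])
    simp [Fin.sum_univ_two] at key
    norm_num at key
    have hconv := strictConvexOn_rpow hgt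
    have h3 := hconv.2 (Set.mem_Ici.mpr (by norm_num : (0:ℝ) ≤ 2))
      (Set.mem_Ici.mpr (by norm_num : (0:ℝ) ≤ 4)) (by norm_num)
      (by norm_num : (0:ℝ) < 1/2) (by norm_num : (0:ℝ) < 1/2) (by norm_num)
    norm_num at h3
    linarith [key, h3]
  · intro hα1
    rcases eq_or_lt_of_le hα with h0 | h0
    · constructor
      · refine ⟨fun x _ y _ => by simp only; rw [abs_sub_comm], ?_⟩
        intro n x _ c hc
        simp only [← h0, Real.rpow_zero]
        exact quad_zero c hc
      · refine ⟨fun x _ y _ => by simp only; rw [add_comm], ?_⟩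
        intro n x _ c hc
        simp only [← h0, Real.rpow_zero]
        exact quad_zero c hc
    · constructor
      · refine ⟨fun x _ y _ => by simp only; rw [abs_sub_comm], ?_⟩
        intro n x _ c hc
        exact quad_abs h0 (by linarith) n x c hc
      · refine ⟨fun x _ y _ => by simp only; rw [add_comm], ?_⟩
        intro n x hx c hc
        rcases eq_or_lt_of_le hα1 with h1 | h1
        · simp only [h1, Real.rpow_one]
          exact quad_lin x c hc
        · exact quad_exp h0 h1 n x hx c hc
end

section
/- If φ : ℝ → [0,∞) is an even continuous function which is convex and decreasing on [0,∞), then φ is positive definite on ℝ, i.e., the kernel (x,y) ↦ φ(x−y) on ℝ is positive definite. -/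
open MeasureTheory Real

/-- A kernel `K` on a subset `S` is positive definite if all quadratic forms built
from finitely many points of `S` are nonnegative. -/
def PosDefKernel {α : Type*} (S : Set α) (K : α → α → ℝ) : Prop :=
  ∀ (n : ℕ) (x : Fin n → α), (∀ i, x i ∈ S) →
    ∀ c : Fin n → ℝ, 0 ≤ ∑ i, ∑ j, c i * c j * K (x i) (x j)

private lemma affine_convexOn (a b : ℝ) (S : Set ℝ) (hS : Convex ℝ S) :
    ConvexOn ℝ S (fun t => a * t + b) := by
  refine ⟨hS, fun x _ y _ p q hp hq hpq => ?_⟩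
  simp only [smul_eq_mul]
  apply le_of_eq
  linear_combination (-b) * hpq

private lemma tent_posdef (d : ℝ) (n : ℕ) (x c : Fin n → ℝ) :
    0 ≤ ∑ i, ∑ j, c i * c j * max (d - |x i - x j|) 0 := by
  set f : Fin n → ℝ → ℝ := fun i => (Set.Icc (x i) (x i + d)).indicator (fun _ => c i) with hf
  have hprod : ∀ i j : Fin n, (fun t => f i t * f j t) =
      (Set.Icc (max (x i) (x j)) (min (x i) (x j) + d)).indicator (fun _ => c i * c j) := by
    intro i j
    funext t
    rw [hf]
    rw [← Set.inter_indicator_mul]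
    congr 1
    rw [Set.Icc_inter_Icc, min_add_add_right]
  have hint : ∀ i j : Fin n, Integrable (fun t => f i t * f j t) := by
    intro i j
    rw [hprod]
    rw [integrable_indicator_iff measurableSet_Icc]
    exact integrableOn_const measure_Icc_lt_top.ne
  have hval : ∀ i j : Fin n, ∫ t, f i t * f j t =
      c i * c j * max (d - |x i - x j|) 0 := by
    intro i j
    rw [hprod, integral_indicator_const _ measurableSet_Icc, Real.volume_real_Icc,
      smul_eq_mul]
    have habs : |x i - x j| = max (x i) (x j) - min (x i) (x j) := (abs_sub_comm (x i) (x j)).trans (max_sub_min_eq_abs (x i) (x j)).symm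
    have h1 : min (x i) (x j) + d - max (x i) (x j) = d - |x i - x j| := by
      rw [habs]; ring
    rw [h1]; ring
  have hsq : ∀ t, (∑ i, f i t) ^ 2 = ∑ i, ∑ j, f i t * f j t := by
    intro t; rw [sq, Finset.sum_mul_sum]
  calc (0:ℝ) ≤ ∫ t, (∑ i, f i t) ^ 2 := integral_nonneg fun t => sq_nonneg _
    _ = ∑ i, ∑ j, c i * c j * max (d - |x i - x j|) 0 := by
        simp_rw [hsq]
        rw [integral_finset_sum _ (fun i _ => integrable_finset_sum _ (fun j _ => hint i j))]
        refine Finset.sum_congr rfl fun i _ => ?_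
        rw [integral_finset_sum _ (fun j _ => hint i j)]
        exact Finset.sum_congr rfl fun j _ => hval i j

private lemma decomp : ∀ (m : ℕ) (φ : ℝ → ℝ) (D : Finset ℝ) (hD : D.Nonempty), D.card ≤ m →
    (∀ e ∈ D, (0:ℝ) ≤ e) →
    ConvexOn ℝ (Set.Icc 0 (D.max' hD)) φ →
    AntitoneOn φ (Set.Icc 0 (D.max' hD)) →
    ∃ a : ℝ → ℝ, (∀ e, 0 ≤ a e) ∧
      ∀ d ∈ D, φ d = φ (D.max' hD) + ∑ e ∈ D, a e * max (e - d) 0 := by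
  intro m
  induction m with
  | zero =>
    intro φ D hD hcard _ _ _
    rw [Nat.le_zero, Finset.card_eq_zero] at hcard
    exact absurd hcard hD.ne_empty
  | succ m ih =>
    intro φ D hD hcard hpos hconv hdec
    set M := D.max' hD with hM
    have hMD : M ∈ D := D.max'_mem hD
    have hM0 : (0:ℝ) ≤ M := hpos _ hMD
    by_cases hE : (D.erase M).Nonempty
    · set M' := (D.erase M).max' hE with hM'
      have hM'E : M' ∈ D.erase M := (D.erase M).max'_mem hE
      have hM'D : M' ∈ D := Finset.mem_of_mem_erase hM'E
      have hM'ne : M' ≠ M := Finset.ne_of_mem_erase hM'E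
      have hM'M : M' < M := lt_of_le_of_ne (D.le_max' _ hM'D) hM'ne
      have hM'0 : (0:ℝ) ≤ M' := hpos _ hM'D
      set s : ℝ := (φ M - φ M') / (M - M') with hs
      have hsub : M - M' ≠ 0 := by linarith
      have hsMM' : s * (M - M') = φ M - φ M' := div_mul_cancel₀ _ hsub
      have hMmem : M ∈ Set.Icc (0:ℝ) M := ⟨hM0, le_refl _⟩
      have hM'mem : M' ∈ Set.Icc (0:ℝ) M := ⟨hM'0, hM'M.le⟩
      have hsle : s ≤ 0 := by
        apply div_nonpos_of_nonpos_of_nonneg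
        · have := hdec hM'mem hMmem hM'M.le
          linarith
        · linarith
      set ψ : ℝ → ℝ := fun t => φ t + ((-s) * t + s * M) with hψ
      have hsubset : Set.Icc (0:ℝ) M' ⊆ Set.Icc 0 M := Set.Icc_subset_Icc_right hM'M.le
      have hψconv : ConvexOn ℝ (Set.Icc 0 M') ψ :=
        (hconv.subset hsubset (convex_Icc _ _)).add (affine_convexOn (-s) (s * M) _ (convex_Icc _ _))
      have hslope : ∀ u v : ℝ, u ∈ Set.Icc (0:ℝ) M' → v ∈ Set.Icc (0:ℝ) M' → u < v →
          φ v - φ u ≤ s * (v - u) := by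
        intro u v hu hv huv
        have hu' : u ∈ Set.Icc (0:ℝ) M := hsubset hu
        have hv' : v ∈ Set.Icc (0:ℝ) M := hsubset hv
        have hvM : v < M := lt_of_le_of_lt hv.2 hM'M
        have hA : (φ u - φ v) / (u - v) ≤ (φ M - φ v) / (M - v) :=
          hconv.secant_mono hv' hu' hMmem (ne_of_lt huv) (ne_of_gt hvM) (le_of_lt (lt_of_lt_of_le huv (hv'.2)))
        have hB : (φ v - φ M) / (v - M) ≤ (φ M' - φ M) / (M' - M) :=
          hconv.secant_mono hMmem hv' hM'mem (ne_of_lt hvM) hM'ne hv.2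
        have e1 : (φ u - φ v) / (u - v) = (φ v - φ u) / (v - u) := by
          rw [← neg_div_neg_eq]; ring_nf
        have e2 : (φ v - φ M) / (v - M) = (φ M - φ v) / (M - v) := by
          rw [← neg_div_neg_eq]; ring_nf
        have e3 : (φ M' - φ M) / (M' - M) = s := by
          rw [hs, ← neg_div_neg_eq]; ring_nf
        have hfin : (φ v - φ u) / (v - u) ≤ s := by
          rw [← e1, ← e3]; exact le_trans hA (by rw [← e2]; exact hB)
        have hvu : (0:ℝ) < v - u := by linarith
        calc φ v - φ u = (φ v - φ u) / (v - u) * (v - u) := by field_simp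
          _ ≤ s * (v - u) := by
              apply mul_le_mul_of_nonneg_right hfin hvu.le
      have hψdec : AntitoneOn ψ (Set.Icc 0 M') := by
        intro u hu v hv huv
        rcases eq_or_lt_of_le huv with rfl | huv'
        · exact le_refl _
        · have := hslope u v hu hv huv'
          simp only [hψ]
          nlinarith
      have hEpos : ∀ e ∈ D.erase M, (0:ℝ) ≤ e := fun e he => hpos _ (Finset.mem_of_mem_erase he)
      have hcard' : (D.erase M).card ≤ m := by
        have := Finset.card_erase_of_mem hMD
        omega
      obtain ⟨a', ha'0, ha'⟩ := ih ψ (D.erase M) hE hcard' hEpos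
        (by rw [← hM']; exact hψconv) (by rw [← hM']; exact hψdec)
      refine ⟨fun e => if e = M then -s else a' e, fun e => ?_, fun d hd => ?_⟩
      · by_cases h : e = M
        · simp [h]; linarith
        · simp [h]; exact ha'0 e
      · have hsplit : ∀ g : ℝ → ℝ, ∑ e ∈ D, g e = g M + ∑ e ∈ D.erase M, g e :=
          fun g => (Finset.add_sum_erase D g hMD).symm
        rw [hsplit]
        have herase : ∑ e ∈ D.erase M, (if e = M then -s else a' e) * max (e - d) 0 =
            ∑ e ∈ D.erase M, a' e * max (e - d) 0 := by
          refine Finset.sum_congr rfl fun e he => ?_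
          rw [if_neg (Finset.ne_of_mem_erase he)]
        beta_reduce
        rw [herase, if_pos rfl]
        by_cases hdM : d = M
        · subst hdM
          have hzero : ∑ e ∈ D.erase M, a' e * max (e - M) 0 = 0 := by
            apply Finset.sum_eq_zero
            intro e he
            have : e ≤ M := D.le_max' _ (Finset.mem_of_mem_erase he)
            rw [max_eq_right (by linarith)]
            ring
          rw [hzero, max_eq_right (by linarith : M - M ≤ 0)]
          ring
        · have hdE : d ∈ D.erase M := Finset.mem_erase.mpr ⟨hdM, hd⟩
          have hdM' : d ≤ M' := (D.erase M).le_max' _ hdE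
          have hdlt : d < M := lt_of_le_of_lt hdM' hM'M
          have hIH := ha' d hdE
          have hψM' : ψ M' = φ M := by
            simp only [hψ]
            nlinarith
          have hψd : ψ d = φ d + (-s) * d + s * M := by simp only [hψ]; ring
          rw [max_eq_left (by linarith : (0:ℝ) ≤ M - d)]
          have : φ d = ψ d - ((-s) * d + s * M) := by rw [hψd]; ring
          rw [this, hIH, hψM']
          ring
    · -- D.erase M is empty: all elements equal M
      refine ⟨fun _ => 0, fun e => le_refl _, fun d hd => ?_⟩
      have hdM : d = M := by
        by_contra h
        exact hE ⟨d, Finset.mem_erase.mpr ⟨h, hd⟩⟩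
      subst hdM
      simp

/-- Pólya-type criterion: an even, continuous, nonnegative function which is convex
and decreasing on `[0,∞)` is positive definite on `ℝ`. -/
theorem polya_criterion (φ : ℝ → ℝ) (hnonneg : ∀ t : ℝ, 0 ≤ φ t)
    (hcont : Continuous φ) (heven : ∀ t : ℝ, φ (-t) = φ t)
    (hconv : ConvexOn ℝ (Set.Ici 0) φ) (hdec : AntitoneOn φ (Set.Ici 0)) :
    PosDefKernel (Set.univ : Set ℝ) (fun x y => φ (x - y)) := by
  intro n x _ c
  show 0 ≤ ∑ i, ∑ j, c i * c j * φ (x i - x j)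
  rcases Nat.eq_zero_or_pos n with rfl | hn
  · simp
  have hne : Nonempty (Fin n) := Fin.pos_iff_nonempty.mp hn
  set D : Finset ℝ := Finset.image (fun p : Fin n × Fin n => |x p.1 - x p.2|) Finset.univ with hDdef
  have hD : D.Nonempty := Finset.Nonempty.image (Finset.univ_nonempty) _
  have hpos : ∀ e ∈ D, (0:ℝ) ≤ e := by
    intro e he
    rw [hDdef, Finset.mem_image] at he
    obtain ⟨p, _, rfl⟩ := he
    exact abs_nonneg _
  set M := D.max' hD with hM
  have hM0 : (0:ℝ) ≤ M := hpos _ (D.max'_mem hD)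
  have hIcc : Set.Icc (0:ℝ) M ⊆ Set.Ici 0 := Set.Icc_subset_Ici_self
  obtain ⟨a, ha0, hrep⟩ := decomp D.card φ D hD (le_refl _) hpos
    (hconv.subset hIcc (convex_Icc _ _)) (hdec.mono hIcc)
  have habs : ∀ t : ℝ, φ t = φ |t| := by
    intro t
    rcases abs_cases t with ⟨h, _⟩ | ⟨h, _⟩
    · rw [h]
    · rw [h, heven]
  have hmem : ∀ i j : Fin n, |x i - x j| ∈ D := by
    intro i j
    rw [hDdef, Finset.mem_image]
    exact ⟨(i, j), Finset.mem_univ _, rfl⟩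
  have key : ∀ i j : Fin n, c i * c j * φ (x i - x j) =
      c i * c j * φ M + ∑ e ∈ D, a e * (c i * c j * max (e - |x i - x j|) 0) := by
    intro i j
    rw [habs (x i - x j), hrep _ (hmem i j), mul_add, Finset.mul_sum]
    congr 1
    exact Finset.sum_congr rfl fun e _ => by ring
  have h2 : ∑ i, ∑ j, c i * c j * φ (x i - x j) =
      φ M * (∑ i, c i) ^ 2 +
        ∑ e ∈ D, a e * (∑ i, ∑ j, c i * c j * max (e - |x i - x j|) 0) := by
    simp_rw [key, Finset.sum_add_distrib]
    congr 1
    · rw [sq, Finset.sum_mul_sum, Finset.mul_sum]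
      refine Finset.sum_congr rfl fun i _ => ?_
      rw [Finset.mul_sum]
      exact Finset.sum_congr rfl fun j _ => by ring
    · have swap : ∀ g : ℝ → Fin n → Fin n → ℝ,
          ∑ i, ∑ j, ∑ e ∈ D, g e i j = ∑ e ∈ D, ∑ i, ∑ j, g e i j := by
        intro g
        have h1 : ∀ i : Fin n, ∑ j, ∑ e ∈ D, g e i j = ∑ e ∈ D, ∑ j, g e i j :=
          fun i => Finset.sum_comm
        simp_rw [h1]
        exact Finset.sum_comm
      rw [swap fun e i j => a e * (c i * c j * max (e - |x i - x j|) 0)]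
      refine Finset.sum_congr rfl fun e _ => ?_
      rw [Finset.mul_sum]
      refine Finset.sum_congr rfl fun i _ => ?_
      rw [Finset.mul_sum]
  rw [h2]
  apply add_nonneg
  · exact mul_nonneg (hnonneg M) (sq_nonneg _)
  · exact Finset.sum_nonneg fun e _ => mul_nonneg (ha0 e) (tent_posdef e n x c)
end

section
/- Let a > 0 and let ψ : [0,a] → [0,∞) be convex with ψ(a) ≤ ψ(t) for all t ∈ [0,a] (equivalently, for convex ψ, the left derivative ψ′(a−) is ≤ 0). Then the function φ(t) := ψ(|t|) is positive definite on [−a,a] in the sense that the kernel (s,t) ↦ φ((t−s)/2) for s,t ∈ [−a,a] is positive definite. -/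
open MeasureTheory Real

lemma toReal_ofReal_max (t : ℝ) : (ENNReal.ofReal t).toReal = max t 0 := by
  rcases le_total 0 t with h | h
  · rw [ENNReal.toReal_ofReal h, max_eq_left h]
  · rw [ENNReal.ofReal_of_nonpos h, max_eq_right h]; rfl

lemma tri_pd {n : ℕ} (x c : Fin n → ℝ) (u : ℝ) :
    0 ≤ ∑ i, ∑ j, c i * c j * max (u - |x j - x i| / 2) 0 := by
  set I : Fin n → Set ℝ := fun i => Set.Icc (x i - u) (x i + u) with hI
  have hmeas : ∀ i, MeasurableSet (I i) := fun i => measurableSet_Icc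
  set g : Fin n → ℝ → ℝ := fun i y => c i * (I i).indicator 1 y with hg
  have hginteq : ∀ i j, (fun y => g i y * g j y)
        = fun y => (c i * c j) * ((I i ∩ I j).indicator 1 y) := by
    intro i j
    funext y
    rw [Set.inter_indicator_one]
    simp only [g, Pi.mul_apply]
    ring
  have key : ∀ i j, c i * c j * max (u - |x j - x i| / 2) 0
      = (1/2) * ∫ y, g i y * g j y := by
    intro i j
    have hvol : (volume (I i ∩ I j)).toReal = max (2*u - |x j - x i|) 0 := by
      simp only [I, Set.Icc_inter_Icc]
      rw [Real.volume_Icc, toReal_ofReal_max]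
      have habs : (x i + u) ⊓ (x j + u) - (x i - u) ⊔ (x j - u) = 2*u - |x j - x i| := by
        rcases le_total (x i) (x j) with h | h
        · rw [min_eq_left (by linarith), max_eq_right (by linarith),
            abs_of_nonneg (by linarith)]; ring
        · rw [min_eq_right (by linarith), max_eq_left (by linarith),
            abs_of_nonpos (by linarith)]; ring
      rw [habs]
    rw [hginteq i j, integral_const_mul, integral_indicator_one ((hmeas i).inter (hmeas j)), measureReal_def, hvol]
    rcases le_total (|x j - x i|) (2*u) with h | h
    · rw [max_eq_left (by linarith), max_eq_left (by linarith)]; ring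
    · rw [max_eq_right (by linarith), max_eq_right (by linarith)]; ring
  have hint : ∀ i j, Integrable (fun y => g i y * g j y) := by
    intro i j
    rw [hginteq i j]
    apply Integrable.const_mul
    rw [integrable_indicator_iff ((hmeas i).inter (hmeas j))]
    refine integrableOn_const ?_ (by simp)
    exact ne_of_lt (lt_of_le_of_lt (measure_mono Set.inter_subset_left)
      (by simp [I, Real.volume_Icc]))
  calc 0 ≤ (1/2) * ∫ y, (∑ i, g i y)^2 := by positivity
    _ = (1/2) * ∫ y, ∑ i, ∑ j, g i y * g j y := by
        congr 1; apply integral_congr_ae; filter_upwards with y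
        rw [sq, Finset.sum_mul_sum]
    _ = (1/2) * ∑ i, ∑ j, ∫ y, g i y * g j y := by
        rw [integral_finset_sum _ (fun i _ => integrable_finset_sum _ (fun j _ => hint i j))]
        congr 1
        exact Finset.sum_congr rfl fun i _ => integral_finset_sum _ (fun j _ => hint i j)
    _ = ∑ i, ∑ j, c i * c j * max (u - |x j - x i| / 2) 0 := by
        rw [Finset.mul_sum]
        refine Finset.sum_congr rfl fun i _ => ?_
        rw [Finset.mul_sum]
        exact Finset.sum_congr rfl fun j _ => (key i j).symm

lemma decomp_s16 (a : ℝ) (ψ : ℝ → ℝ)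
    (hconv : ConvexOn ℝ (Set.Icc 0 a) ψ)
    (hmin : ∀ t ∈ Set.Icc (0:ℝ) a, ψ a ≤ ψ t) :
    ∀ F : Finset ℝ, ∀ (haF : a ∈ F), ↑F ⊆ Set.Icc (0:ℝ) a →
    ∃ α : ℝ → ℝ, (∀ u, 0 ≤ α u) ∧
      (∀ r ∈ F, ψ r = ψ a + ∑ u ∈ F, α u * max (u - r) 0) ∧
      (∀ r, 0 ≤ r → r ≤ F.min' ⟨a, haF⟩ →
        ψ a + ∑ u ∈ F, α u * (u - r) ≤ ψ r) := by
  intro F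
  induction F using Finset.strongInductionOn with
  | _ F ih =>
  intro haF hsub
  have hne : F.Nonempty := ⟨a, haF⟩
  set u₀ := F.min' hne with hu₀
  have hu₀F : u₀ ∈ F := F.min'_mem hne
  have hu₀Icc : u₀ ∈ Set.Icc (0:ℝ) a := hsub hu₀F
  by_cases hcase : u₀ = a
  · -- then F = {a}
    have hFa : F = {a} := by
      apply Finset.eq_singleton_iff_unique_mem.2
      refine ⟨haF, fun r hr => le_antisymm (hsub hr).2 ?_⟩
      rw [← hcase]; exact F.min'_le r hr
    subst hFa
    refine ⟨fun _ => 0, fun _ => le_refl 0, ?_, ?_⟩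
    · intro r hr
      simp only [Finset.mem_singleton] at hr
      subst hr
      simp
    · intro r hr0 hr1
      simp only [Finset.sum_singleton, zero_mul, add_zero]
      exact hmin r ⟨hr0, le_trans hr1 (Finset.min'_le _ _ (Finset.mem_singleton_self a))⟩
  · -- u₀ < a
    have hu₀a : u₀ < a := lt_of_le_of_ne hu₀Icc.2 hcase
    set F' := F.erase u₀ with hF'
    have haF' : a ∈ F' := Finset.mem_erase.2 ⟨fun h => hcase h.symm, haF⟩
    have hne' : F'.Nonempty := ⟨a, haF'⟩
    have hsub' : ↑F' ⊆ Set.Icc (0:ℝ) a := fun r hr => hsub (Finset.erase_subset _ _ hr)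
    obtain ⟨α', hα'0, hα'int, hα'ext⟩ := ih F' (Finset.erase_ssubset hu₀F) haF' hsub'
    set u₁ := F'.min' hne' with hu₁
    have hu₁F' : u₁ ∈ F' := F'.min'_mem hne'
    have hu₁F : u₁ ∈ F := Finset.erase_subset _ _ hu₁F'
    have hu₀u₁ : u₀ < u₁ :=
      lt_of_le_of_ne (F.min'_le u₁ hu₁F) (fun h => (Finset.mem_erase.1 hu₁F').1 h.symm)
    have hne01 : u₀ ≠ u₁ := ne_of_lt hu₀u₁
    have hleF' : ∀ v ∈ F', u₁ ≤ v := fun v hv => F'.min'_le v hv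
    set h0 := ψ a + ∑ v ∈ F', α' v * (v - u₀) with hh0
    have hh0le : h0 ≤ ψ u₀ := hα'ext u₀ hu₀Icc.1 hu₀u₁.le
    set β := (ψ u₀ - h0) / (u₁ - u₀) with hβ
    have hβ0 : 0 ≤ β := div_nonneg (by linarith) (by linarith)
    set α := fun v => if v = u₁ then α' u₁ + β else if v = u₀ then 0 else α' v with hα
    have hαu₀ : α u₀ = 0 := by
      simp [hα, hne01]
    have hα0 : ∀ v, 0 ≤ α v := by
      intro v
      simp only [hα]
      split_ifs with h1 h2
      · have := hα'0 u₁; linarith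
      · exact le_refl 0
      · exact hα'0 v
    have hu₀notF' : u₀ ∉ F' := Finset.notMem_erase _ _
    have hFsplit : F = insert u₀ F' := (Finset.insert_erase hu₀F).symm
    have hsum : ∀ m : ℝ → ℝ, ∑ v ∈ F, α v * m v
        = β * m u₁ + ∑ v ∈ F', α' v * m v := by
      intro m
      rw [hFsplit, Finset.sum_insert hu₀notF', hαu₀, zero_mul, zero_add]
      have he : ∀ v ∈ F', α v * m v = α' v * m v + (if v = u₁ then β * m v else 0) := by
        intro v hv
        by_cases h1 : v = u₁
        · subst h1
          simp only [hα, if_pos rfl]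
          simp only [eq_self_iff_true, if_true]
          ring
        · have h2 : v ≠ u₀ := by intro hX; rw [hX] at hv; exact hu₀notF' hv
          simp only [hα, if_neg h1, if_neg h2]
          simp [if_neg h1]
      rw [Finset.sum_congr rfl he, Finset.sum_add_distrib, Finset.sum_ite_eq' F' u₁]
      rw [if_pos hu₁F']
      ring
    have hβprod : β * (u₁ - u₀) = ψ u₀ - h0 := by
      rw [hβ, div_mul_cancel₀ _ (ne_of_gt (by linarith : (0:ℝ) < u₁ - u₀))]
    have hint : ∀ r ∈ F, ψ r = ψ a + ∑ v ∈ F, α v * max (v - r) 0 := by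
      intro r hr
      rw [hsum]
      by_cases hru₀ : r = u₀
      · rw [hru₀]
        have he : ∀ v ∈ F', α' v * max (v - u₀) 0 = α' v * (v - u₀) := by
          intro v hv
          rw [max_eq_left (by linarith [hleF' v hv])]
        rw [Finset.sum_congr rfl he, max_eq_left (by linarith)]
        rw [hβprod, hh0]; ring
      · have hrF' : r ∈ F' := Finset.mem_erase.2 ⟨hru₀, hr⟩
        have : max (u₁ - r) 0 = 0 := max_eq_right (by linarith [hleF' r hrF'])
        rw [this, mul_zero, zero_add]
        exact hα'int r hrF'
    refine ⟨α, hα0, hint, ?_⟩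
    intro r hr0 hr1
    have hrmin : r ≤ u₀ := hr1
    set S := ∑ v ∈ F, α v with hS
    have hLaff : ∀ s t : ℝ, (ψ a + ∑ v ∈ F, α v * (v - s)) - (ψ a + ∑ v ∈ F, α v * (v - t))
        = S * (t - s) := by
      intro s t
      have he : ∀ v ∈ F, α v * (v - s) = α v * (v - t) + α v * (t - s) := by
        intro v _; ring
      rw [Finset.sum_congr rfl he, Finset.sum_add_distrib, ← Finset.sum_mul]
      ring
    have hLu₀ : ψ a + ∑ v ∈ F, α v * (v - u₀) = ψ u₀ := by
      have h1 := hint u₀ hu₀F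
      have he : ∀ v ∈ F, α v * max (v - u₀) 0 = α v * (v - u₀) := by
        intro v hv
        rcases Finset.mem_insert.1 (hFsplit ▸ hv) with h | h
        · rw [h, hαu₀]; simp
        · rw [max_eq_left (by linarith [hleF' v h])]
      rw [Finset.sum_congr rfl he] at h1
      linarith [h1]
    have hLu₁ : ψ a + ∑ v ∈ F, α v * (v - u₁) = ψ u₁ := by
      have h1 := hint u₁ hu₁F
      have he : ∀ v ∈ F, α v * max (v - u₁) 0 = α v * (v - u₁) := by
        intro v hv
        rcases Finset.mem_insert.1 (hFsplit ▸ hv) with h | h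
        · rw [h, hαu₀, zero_mul, zero_mul]
        · rcases eq_or_lt_of_le (hleF' v h) with h' | h'
          · rw [← h']; simp
          · rw [max_eq_left (by linarith)]
      rw [Finset.sum_congr rfl he] at h1
      linarith [h1]
    have hSrel : S * (u₁ - u₀) = ψ u₀ - ψ u₁ := by
      have h2 := hLaff u₀ u₁
      rw [hLu₀, hLu₁] at h2
      linarith
    have hgoal : ψ a + ∑ v ∈ F, α v * (v - r) = ψ u₀ + S * (u₀ - r) := by
      have h2 := hLaff r u₀
      rw [hLu₀] at h2
      linarith
    rw [hgoal]
    rcases eq_or_lt_of_le hrmin with h | h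
    · rw [h]; simp
    · have hu₁Icc : u₁ ∈ Set.Icc (0:ℝ) a := hsub' hu₁F'
      have hrIcc : r ∈ Set.Icc (0:ℝ) a := ⟨hr0, by linarith [hu₀Icc.2]⟩
      have hslope := hconv.slope_mono_adjacent hrIcc hu₁Icc h hu₀u₁
      have h1 : (ψ u₀ - ψ r) * (u₁ - u₀) ≤ (ψ u₁ - ψ u₀) * (u₀ - r) := by
        rw [div_le_div_iff₀ (by linarith) (by linarith)] at hslope
        linarith [hslope]
      nlinarith [hSrel, h1, sub_pos.2 h, sub_pos.2 hu₀u₁]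

/-- If `ψ : [0,a] → [0,∞)` is convex and attains its minimum at `a`, then
`φ(t) := ψ(|t|)` is positive definite on `[-a,a]` in the sense that the kernel
`(s,t) ↦ φ((t-s)/2)` on `[-a,a]` is positive definite. -/
theorem convex_min_posDef (a : ℝ) (ha : 0 < a) (ψ : ℝ → ℝ)
    (hnonneg : ∀ t ∈ Set.Icc (0 : ℝ) a, 0 ≤ ψ t)
    (hconv : ConvexOn ℝ (Set.Icc 0 a) ψ)
    (hmin : ∀ t ∈ Set.Icc (0 : ℝ) a, ψ a ≤ ψ t) :
    PosDefKernel (Set.Icc (-a) a) (fun s t => ψ (|(t - s) / 2|)) := by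
  intro n x hx c
  -- the finite set of relevant radii, together with `a`
  set F : Finset ℝ :=
    (Finset.image (fun p : Fin n × Fin n => |x p.2 - x p.1| / 2) Finset.univ) ∪ {a} with hF
  have haF : a ∈ F := Finset.mem_union_right _ (Finset.mem_singleton_self a)
  have habs : ∀ i, |x i| ≤ a := fun i => abs_le.2 ⟨(hx i).1, (hx i).2⟩
  have hFsub : ↑F ⊆ Set.Icc (0:ℝ) a := by
    intro r hr
    rw [Finset.mem_coe, hF, Finset.mem_union] at hr
    rcases hr with hr | hr
    · obtain ⟨p, -, rfl⟩ := Finset.mem_image.1 hr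
      constructor
      · positivity
      · have h1 := abs_sub (x p.2) (x p.1)
        have h2 := habs p.1
        have h3 := habs p.2
        linarith
    · rw [Finset.mem_singleton] at hr
      rw [hr]; exact ⟨ha.le, le_refl a⟩
  obtain ⟨α, hα0, hαint, -⟩ := decomp_s16 a ψ hconv hmin F haF hFsub
  have hK : ∀ i j, ψ (|(x j - x i) / 2|)
      = ψ a + ∑ u ∈ F, α u * max (u - |x j - x i| / 2) 0 := by
    intro i j
    have h1 : |(x j - x i) / 2| = |x j - x i| / 2 := by
      rw [abs_div, abs_two]
    rw [h1]
    refine hαint _ ?_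
    exact Finset.mem_union_left _ (Finset.mem_image.2 ⟨(i, j), Finset.mem_univ _, rfl⟩)
  have expand : ∀ i j, c i * c j * ψ (|(x j - x i) / 2|)
      = c i * c j * ψ a + ∑ u ∈ F, α u * (c i * c j * max (u - |x j - x i| / 2) 0) := by
    intro i j
    rw [hK i j, mul_add, Finset.mul_sum]
    congr 1
    exact Finset.sum_congr rfl fun u _ => by ring
  have step : ∑ i, ∑ j, c i * c j * ψ (|(x j - x i) / 2|)
      = (∑ i, ∑ j, c i * c j * ψ a)
        + ∑ u ∈ F, α u * (∑ i, ∑ j, c i * c j * max (u - |x j - x i| / 2) 0) := by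
    calc ∑ i, ∑ j, c i * c j * ψ (|(x j - x i) / 2|)
        = ∑ i, ((∑ j, c i * c j * ψ a)
            + ∑ j, ∑ u ∈ F, α u * (c i * c j * max (u - |x j - x i| / 2) 0)) := by
          refine Finset.sum_congr rfl fun i _ => ?_
          rw [← Finset.sum_add_distrib]
          exact Finset.sum_congr rfl fun j _ => expand i j
      _ = (∑ i, ∑ j, c i * c j * ψ a)
            + ∑ i, ∑ j, ∑ u ∈ F, α u * (c i * c j * max (u - |x j - x i| / 2) 0) :=
          Finset.sum_add_distrib
      _ = (∑ i, ∑ j, c i * c j * ψ a)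
            + ∑ u ∈ F, α u * (∑ i, ∑ j, c i * c j * max (u - |x j - x i| / 2) 0) := by
          congr 1
          calc ∑ i, ∑ j, ∑ u ∈ F, α u * (c i * c j * max (u - |x j - x i| / 2) 0)
              = ∑ i, ∑ u ∈ F, ∑ j, α u * (c i * c j * max (u - |x j - x i| / 2) 0) :=
                Finset.sum_congr rfl fun i _ => Finset.sum_comm
            _ = ∑ u ∈ F, ∑ i, ∑ j, α u * (c i * c j * max (u - |x j - x i| / 2) 0) :=
                Finset.sum_comm
            _ = ∑ u ∈ F, α u * ∑ i, ∑ j, c i * c j * max (u - |x j - x i| / 2) 0 := by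
                refine Finset.sum_congr rfl fun u _ => ?_
                simp only [Finset.mul_sum]
  rw [step]
  have h1 : 0 ≤ ∑ i, ∑ j, c i * c j * ψ a := by
    have : ∑ i, ∑ j, c i * c j * ψ a = (∑ i, c i)^2 * ψ a := by
      rw [sq, Finset.sum_mul_sum, Finset.sum_mul]
      refine Finset.sum_congr rfl fun i _ => ?_
      rw [Finset.sum_mul]
    rw [this]
    have := hnonneg a ⟨ha.le, le_refl a⟩
    positivity
  have h2 : 0 ≤ ∑ u ∈ F, α u * (∑ i, ∑ j, c i * c j * max (u - |x j - x i| / 2) 0) := by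
    refine Finset.sum_nonneg fun u _ => ?_
    exact mul_nonneg (hα0 u) (tri_pd x c u)
  linarith
end
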